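/- arXiv:2206.07141 — 6 statements merged into one kernel-verified Lean document; each statement's English description precedes it below -/
import Mathlib

section
/- Let (G, ℋ) be a proper pair. The following are equivalent: (1) there is a compact subset S ⊆ G such that G is algebraically generated by S together with the union of the members of ℋ; (2) there exists a Cayley-Abels graph of G with respect to ℋ. -/
open MulAction

universe u v

/-- A topological group is compactly generated if it has a compact subset that
generates it algebraically. -/
def IsCompactlyGeneratedGroup (G : Type*) [Group G] [TopologicalSpace G] : Prop :=
  ∃ S : Set G, IsCompact S ∧ Subgroup.closure S = ⊤

/-- A topological group `G` is compactly presented if there are a compact generating set `S`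
and `n : ℕ` such that the kernel of the canonical map `FreeGroup S →* G` is generated as a
normal subgroup by its elements of word length at most `n`. -/
def IsCompactlyPresentedGroup (G : Type*) [Group G] [TopologicalSpace G] : Prop :=
  ∃ (S : Set G) (n : ℕ), IsCompact S ∧ Subgroup.closure S = ⊤ ∧
    Subgroup.normalClosure
      {x : FreeGroup S |
        x ∈ (FreeGroup.lift (fun s : S => (s : G))).ker ∧
          ∃ l : List (S × Bool), FreeGroup.mk l = x ∧ l.length ≤ n} =
      (FreeGroup.lift (fun s : S => (s : G))).ker

/-- A topological group is coherent if every closed compactly generated subgroup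
(with the subspace topology) is compactly presented. -/
def IsCoherentGroup (G : Type*) [Group G] [TopologicalSpace G] : Prop :=
  ∀ Q : Subgroup G, IsClosed (Q : Set G) → IsCompactlyGeneratedGroup Q →
    IsCompactlyPresentedGroup Q

section Amalgam

variable {G : Type u} [Group G]

/-- The two-element family of groups `A`, `B`. -/
def amalgamFamily (A B : Subgroup G) : Bool → Type u := fun b => match b with
  | true => A
  | false => B

instance (A B : Subgroup G) : (b : Bool) → Group (amalgamFamily A B b)
  | true => inferInstanceAs (Group A)
  | false => inferInstanceAs (Group B)

/-- The inclusions of `C = A ⊓ B` into `A` and `B`. -/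
def amalgamMaps (A B : Subgroup G) : (b : Bool) → (↥(A ⊓ B) →* amalgamFamily A B b)
  | true => Subgroup.inclusion inf_le_left
  | false => Subgroup.inclusion inf_le_right

/-- The inclusions of `A` and `B` into `G`. -/
def amalgamProj (A B : Subgroup G) : (b : Bool) → (amalgamFamily A B b →* G)
  | true => A.subtype
  | false => B.subtype

/-- The canonical homomorphism from the pushout (in the category of groups) of the
inclusions `A ⊓ B ↪ A` and `A ⊓ B ↪ B` to `G`. -/
def amalgamCanonicalHom (A B : Subgroup G) : Monoid.PushoutI (amalgamMaps A B) →* G :=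
  Monoid.PushoutI.lift (amalgamProj A B) (A ⊓ B).subtype
    (by rintro (_ | _) <;> exact MonoidHom.ext fun x => rfl)

/-- `G` splits as the amalgamated free product `A ∗_(A ⊓ B) B` if the canonical homomorphism
from the pushout of the inclusions to `G` is bijective. -/
def IsAmalgamatedProduct (A B : Subgroup G) : Prop :=
  Function.Bijective (amalgamCanonicalHom A B)

end Amalgam

section Graphs

variable {V : Type v}

/-- The graph obtained from `Γ` by deleting the vertex `v` (making it isolated). -/
def SimpleGraph.deleteVertex (Γ : SimpleGraph V) (v : V) : SimpleGraph V where
  Adj a b := Γ.Adj a b ∧ a ≠ v ∧ b ≠ v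
  symm := ⟨fun a b h => ⟨h.1.symm, h.2.2, h.2.1⟩⟩
  loopless := ⟨fun a h => Γ.loopless.irrefl a h.1⟩

/-- `Γ` is fine at `v` if for every neighbour `x` of `v` and every `n`, there are only
finitely many neighbours of `v` joined to `x` by a path of length at most `n` avoiding `v`;
i.e. balls of the angle metric on the neighbours of `v` are finite. -/
def SimpleGraph.FineAt (Γ : SimpleGraph V) (v : V) : Prop :=
  ∀ x ∈ Γ.neighborSet v, ∀ n : ℕ,
    {y | y ∈ Γ.neighborSet v ∧ ∃ p : (Γ.deleteVertex v).Walk x y, p.length ≤ n}.Finite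

/-- A graph is fine if it is fine at every vertex. -/
def SimpleGraph.Fine (Γ : SimpleGraph V) : Prop := ∀ v : V, Γ.FineAt v

/-- A connected graph is hyperbolic if its path metric satisfies the four point condition
up to an additive constant. -/
def SimpleGraph.IsHyperbolic (Γ : SimpleGraph V) : Prop :=
  ∃ δ : ℝ, 0 ≤ δ ∧ ∀ x y z w : V,
    (Γ.dist x y + Γ.dist z w : ℝ) ≤
      max ((Γ.dist x z + Γ.dist y w : ℝ)) ((Γ.dist x w + Γ.dist y z : ℝ)) + δ

/-- Two graphs (with their path metrics) are quasi-isometric. -/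
def QuasiIsometricGraphs {V₁ : Type*} {V₂ : Type*}
    (Γ₁ : SimpleGraph V₁) (Γ₂ : SimpleGraph V₂) : Prop :=
  ∃ (f : V₁ → V₂) (L C : ℝ), 1 ≤ L ∧ 0 ≤ C ∧
    (∀ x y : V₁,
      L⁻¹ * (Γ₁.dist x y : ℝ) - C ≤ (Γ₂.dist (f x) (f y) : ℝ) ∧
      (Γ₂.dist (f x) (f y) : ℝ) ≤ L * (Γ₁.dist x y : ℝ) + C) ∧
    ∀ z : V₂, ∃ x : V₁, (Γ₂.dist z (f x) : ℝ) ≤ C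

end Graphs

section GGraphs

variable (G : Type u) [Group G] [TopologicalSpace G] {V : Type v} [MulAction G V]

/-- The action of `G` on the vertices of `Γ` is by graph automorphisms. -/
def IsGraphAction (Γ : SimpleGraph V) : Prop :=
  ∀ (g : G) (a b : V), Γ.Adj a b → Γ.Adj (g • a) (g • b)

/-- The action is discrete: all vertex stabilizers are open. -/
def IsDiscreteAction (Γ : SimpleGraph V) : Prop :=
  ∀ v : V, IsOpen ((stabilizer G v : Subgroup G) : Set G)

/-- The action is cocompact: finitely many orbits of vertices and of edges. -/
def IsCocompactAction (Γ : SimpleGraph V) : Prop :=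
  (∃ s : Set V, s.Finite ∧ ∀ v : V, ∃ g : G, g • v ∈ s) ∧
  (∃ t : Set (V × V), t.Finite ∧ ∀ a b : V, Γ.Adj a b → ∃ g : G, (g • a, g • b) ∈ t)

/-- Pointwise edge stabilizers are compact. -/
def HasCompactEdgeStabilizers (Γ : SimpleGraph V) : Prop :=
  ∀ a b : V, Γ.Adj a b →
    IsCompact ((stabilizer G a ⊓ stabilizer G b : Subgroup G) : Set G)

/-- The conjugate `g H g⁻¹` of a subgroup. -/
def conjSubgroup {G : Type u} [Group G] (g : G) (H : Subgroup G) : Subgroup G :=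
  Subgroup.map (MulAut.conj g).toMonoidHom H

/-- A proper pair: `G` has a compact open subgroup, `ℋ` is a finite collection of open
subgroups, and no two distinct non-compact members of `ℋ` are conjugate. -/
def IsProperPair (G : Type u) [Group G] [TopologicalSpace G]
    (ℋ : Finset (Subgroup G)) : Prop :=
  (∃ U : Subgroup G, IsCompact (U : Set G) ∧ IsOpen (U : Set G)) ∧
  (∀ H ∈ ℋ, IsOpen ((H : Subgroup G) : Set G)) ∧
  (∀ H ∈ ℋ, ∀ K ∈ ℋ, ¬ IsCompact ((H : Subgroup G) : Set G) →
    ¬ IsCompact ((K : Subgroup G) : Set G) →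
    (∃ g : G, conjSubgroup g H = K) → H = K)

/-- `Γ` is a Cayley-Abels graph of `G` with respect to `ℋ`. -/
def IsCayleyAbelsGraph (ℋ : Finset (Subgroup G)) (Γ : SimpleGraph V) : Prop :=
  IsGraphAction G Γ ∧
  Γ.Connected ∧
  IsDiscreteAction G Γ ∧
  IsCocompactAction G Γ ∧
  HasCompactEdgeStabilizers G Γ ∧
  (∀ v : V, IsCompact ((stabilizer G v : Subgroup G) : Set G) ∨
    ∃ H ∈ ℋ, ∃ g : G, stabilizer G v = conjSubgroup g H) ∧
  (∀ H ∈ ℋ, ∃ v : V, stabilizer G v = H) ∧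
  (∀ H ∈ ℋ, ¬ IsCompact ((H : Subgroup G) : Set G) →
    ∀ u v : V, stabilizer G u = H → stabilizer G v = H → ∃ g : G, g • u = v)

end GGraphs


section CAGAuxSection
open Pointwise
set_option linter.unusedSectionVars false
namespace CAGAux


variable {G : Type u} [Group G]

theorem mem_conjSubgroup_iff {g x : G} {H : Subgroup G} :
    x ∈ conjSubgroup g H ↔ ∃ h ∈ H, g * h * g⁻¹ = x := by
  simp [conjSubgroup, Subgroup.mem_map]

theorem conjSubgroup_coe (g : G) (H : Subgroup G) :
    ((conjSubgroup g H : Subgroup G) : Set G) = (fun h => g * h * g⁻¹) '' (H : Set G) := by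
  ext x
  simp [mem_conjSubgroup_iff, Set.mem_image]

theorem conjSubgroup_conjSubgroup (g₁ g₂ : G) (H : Subgroup G) :
    conjSubgroup g₁ (conjSubgroup g₂ H) = conjSubgroup (g₁ * g₂) H := by
  ext x
  simp only [mem_conjSubgroup_iff]
  constructor
  · rintro ⟨y, ⟨h, hh, rfl⟩, rfl⟩
    exact ⟨h, hh, by group⟩
  · rintro ⟨h, hh, rfl⟩
    exact ⟨g₂ * h * g₂⁻¹, ⟨h, hh, rfl⟩, by group⟩

theorem conjSubgroup_one (H : Subgroup G) : conjSubgroup 1 H = H := by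
  ext x; simp [mem_conjSubgroup_iff]

section Top

variable [TopologicalSpace G] [IsTopologicalGroup G]

theorem isCompact_conjSubgroup {H : Subgroup G} (hH : IsCompact (H : Set G)) (g : G) :
    IsCompact ((conjSubgroup g H : Subgroup G) : Set G) := by
  rw [conjSubgroup_coe]
  exact hH.image ((continuous_const.mul continuous_id).mul continuous_const)

theorem isOpen_conjSubgroup {H : Subgroup G} (hH : IsOpen (H : Set G)) (g : G) :
    IsOpen ((conjSubgroup g H : Subgroup G) : Set G) := by
  rw [conjSubgroup_coe]
  have h1 : (fun h => g * h * g⁻¹) '' (H : Set G) = (· * g⁻¹) '' ((g * ·) '' (H : Set G)) := by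
    rw [Set.image_image]
  rw [h1]
  exact isOpenMap_mul_right g⁻¹ _ (isOpenMap_mul_left g _ hH)

theorem not_isCompact_conjSubgroup {H : Subgroup G} (hH : ¬ IsCompact (H : Set G)) (g : G) :
    ¬ IsCompact ((conjSubgroup g H : Subgroup G) : Set G) := fun h =>
  hH (by simpa [conjSubgroup_conjSubgroup, conjSubgroup_one] using isCompact_conjSubgroup h g⁻¹)

end Top

section SumSigma

variable {α : Type*} {β : Type*} {ι : Type*} {f : ι → Type*}

instance sumSMul [SMul G α] [SMul G β] : SMul G (α ⊕ β) :=
  ⟨fun g x => Sum.map (g • ·) (g • ·) x⟩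

@[simp] theorem smul_inl [SMul G α] [SMul G β] (g : G) (a : α) :
    (g • (Sum.inl a : α ⊕ β)) = Sum.inl (g • a) := rfl

@[simp] theorem smul_inr [SMul G α] [SMul G β] (g : G) (b : β) :
    (g • (Sum.inr b : α ⊕ β)) = Sum.inr (g • b) := rfl

instance sumMulAction [MulAction G α] [MulAction G β] : MulAction G (α ⊕ β) where
  one_smul x := by cases x <;> simp
  mul_smul g h x := by cases x <;> simp [mul_smul]

instance sigmaSMul [∀ i, SMul G (f i)] : SMul G (Σ i, f i) :=
  ⟨fun g x => ⟨x.1, g • x.2⟩⟩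

@[simp] theorem smul_sigmaMk [∀ i, SMul G (f i)] (g : G) (i : ι) (a : f i) :
    (g • (⟨i, a⟩ : Σ i, f i)) = ⟨i, g • a⟩ := rfl

instance sigmaMulAction [∀ i, MulAction G (f i)] : MulAction G (Σ i, f i) where
  one_smul x := by cases x; simp
  mul_smul g h x := by cases x; simp [mul_smul]

theorem stabilizer_inl [MulAction G α] [MulAction G β] (a : α) :
    stabilizer G (Sum.inl a : α ⊕ β) = stabilizer G a := by
  ext g; simp [mem_stabilizer_iff]

theorem stabilizer_inr [MulAction G α] [MulAction G β] (b : β) :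
    stabilizer G (Sum.inr b : α ⊕ β) = stabilizer G b := by
  ext g; simp [mem_stabilizer_iff]

theorem stabilizer_sigmaMk [∀ i, MulAction G (f i)] (i : ι) (a : f i) :
    stabilizer G (⟨i, a⟩ : Σ i, f i) = stabilizer G a := by
  ext g
  rw [mem_stabilizer_iff, mem_stabilizer_iff, smul_sigmaMk]
  constructor
  · intro h
    exact eq_of_heq (Sigma.mk.inj_iff.mp h).2
  · intro h
    rw [h]

end SumSigma

theorem stabilizer_mk (H : Subgroup G) (x : G) :
    stabilizer G (QuotientGroup.mk x : G ⧸ H) = conjSubgroup x H := by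
  have h1 : (QuotientGroup.mk x : G ⧸ H) = x • (QuotientGroup.mk 1 : G ⧸ H) := by
    simp [MulAction.Quotient.smul_mk]
  rw [h1, MulAction.stabilizer_smul_eq_stabilizer_map_conj]
  rw [show (QuotientGroup.mk 1 : G ⧸ H) = ((1 : G) : G ⧸ H) from rfl,
    MulAction.stabilizer_quotient]
  rfl

theorem reachable_smul {V : Type v} [MulAction G V] {Γ : SimpleGraph V}
    (hΓ : IsGraphAction G Γ) (g : G) {u v : V} (h : Γ.Reachable u v) :
    Γ.Reachable (g • u) (g • v) := by
  obtain ⟨p⟩ := h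
  induction p with
  | nil => exact SimpleGraph.Reachable.refl _
  | cons h p ih => exact (SimpleGraph.Adj.reachable (hΓ g _ _ h)).trans ih



variable {G : Type u} [Group G]

abbrev cagVert (G : Type u) [Group G] (U : Subgroup G) (ℋ : Finset (Subgroup G)) : Type u :=
  (G ⧸ U) ⊕ (Σ H : {H : Subgroup G // H ∈ ℋ}, G ⧸ H.val)

def cagAdj (U : Subgroup G) (ℋ : Finset (Subgroup G)) (N : Set G) :
    cagVert G U ℋ → cagVert G U ℋ → Prop
  | Sum.inl a, Sum.inl b =>
      a ≠ b ∧ ∃ x y : G, QuotientGroup.mk x = a ∧ QuotientGroup.mk y = b ∧ x⁻¹ * y ∈ N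
  | Sum.inl a, Sum.inr ⟨H, b⟩ =>
      ∃ x y : G, QuotientGroup.mk x = a ∧ QuotientGroup.mk y = b ∧
        x⁻¹ * y ∈ (U : Set G) * (H.val : Set G)
  | Sum.inr ⟨H, b⟩, Sum.inl a =>
      ∃ x y : G, QuotientGroup.mk x = a ∧ QuotientGroup.mk y = b ∧
        x⁻¹ * y ∈ (U : Set G) * (H.val : Set G)
  | Sum.inr _, Sum.inr _ => False

def cagGraph (U : Subgroup G) (ℋ : Finset (Subgroup G)) (N : Set G)
    (hN : ∀ x ∈ N, x⁻¹ ∈ N) : SimpleGraph (cagVert G U ℋ) where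
  Adj := cagAdj U ℋ N
  symm := by
    constructor
    rintro (a | ⟨H, b⟩) (c | ⟨H', d⟩) h
    · obtain ⟨hne, x, y, hx, hy, hxy⟩ := h
      refine ⟨hne.symm, y, x, hy, hx, ?_⟩
      have := hN _ hxy
      rwa [mul_inv_rev, inv_inv] at this
    · exact h
    · exact h
    · exact h.elim
  loopless := by
    constructor
    rintro (a | ⟨H, b⟩) h
    · exact h.1 rfl
    · exact h


theorem generation_of_graph [TopologicalSpace G]
    {V : Type*} [MulAction G V] {ℋ : Finset (Subgroup G)} {Γ : SimpleGraph V}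
    (hCA : IsCayleyAbelsGraph G ℋ Γ) :
    ∃ S : Set G, IsCompact S ∧
      Subgroup.closure (S ∪ ⋃ H ∈ ℋ, ((H : Subgroup G) : Set G)) = ⊤ := by
  classical
  obtain ⟨hact, hconn, -, ⟨⟨s₀, hs₀fin, hs₀cov⟩, t, htfin, htcov⟩, -, hclass, -, -⟩ := hCA
  obtain ⟨v₀⟩ := hconn.nonempty
  set s : Set V := insert v₀ s₀ with hs
  have hsfin : s.Finite := hs₀fin.insert v₀
  have hscov : ∀ v : V, ∃ g : G, g • v ∈ s := fun v =>
    (hs₀cov v).imp fun g h => Set.mem_insert_of_mem _ h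
  choose σ hσ using hscov
  have hcex : ∀ w w' : V, ∃ g : G, (∃ h : G, h • w = w') → g • w = w' := by
    intro w w'
    by_cases h : ∃ h : G, h • w = w'
    · exact ⟨h.choose, fun _ => h.choose_spec⟩
    · exact ⟨1, fun hh => absurd hh h⟩
  choose c hc using hcex
  set A : Set G := ⋃ w ∈ s, ((stabilizer G w : Subgroup G) : Set G) with hA
  set F : Set G := ((fun p : V × V => c p.1 p.2) '' (s ×ˢ s)) ∪
      ((fun p : V × V => σ (σ p.1 • p.2)) '' t) with hF
  have hFfin : F.Finite := ((hsfin.prod hsfin).image _).union (htfin.image _)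
  set K : Subgroup G := Subgroup.closure (A ∪ F) with hK
  have hstabK : ∀ w ∈ s, ((stabilizer G w : Subgroup G) : Set G) ⊆ (K : Set G) := by
    intro w hw x hx
    exact Subgroup.subset_closure (Or.inl (by rw [hA]; exact Set.mem_biUnion hw hx))
  have hFK : F ⊆ (K : Set G) := fun x hx => Subgroup.subset_closure (Or.inr hx)
  have lem1 : ∀ (h : G) (w : V), w ∈ s → h • w ∈ s → h ∈ K := by
    intro h w hw hw'
    have hcw : c w (h • w) • w = h • w := hc w (h • w) ⟨h, rfl⟩
    have hinv : (c w (h • w))⁻¹ • (h • w) = w := by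
      rw [inv_smul_eq_iff, hcw]
    have h1 : h * (c w (h • w))⁻¹ ∈ stabilizer G (h • w) := by
      rw [mem_stabilizer_iff, mul_smul, hinv]
    have hcK : c w (h • w) ∈ K := hFK (Or.inl ⟨(w, h • w), Set.mk_mem_prod hw hw', rfl⟩)
    have h2 : h * (c w (h • w))⁻¹ ∈ K := hstabK _ hw' h1
    simpa using mul_mem h2 hcK
  have main : ∀ y : V, ∃ k : G, k ∈ K ∧ ∃ w ∈ s, y = k • w := by
    have step : ∀ x y : V, Γ.Adj x y →
        (∃ k : G, k ∈ K ∧ ∃ w ∈ s, x = k • w) →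
        ∃ k : G, k ∈ K ∧ ∃ w ∈ s, y = k • w := by
      rintro x y hxy ⟨k, hk, w, hw, rfl⟩
      have hadj : Γ.Adj w (k⁻¹ • y) := by
        have h0 := hact k⁻¹ _ _ hxy
        rwa [inv_smul_smul] at h0
      obtain ⟨g, hg⟩ := htcov _ _ hadj
      have hhw : (σ (g • w) * g) • w ∈ s := by
        rw [mul_smul]; exact hσ _
      have hhK : σ (g • w) * g ∈ K := lem1 _ w hw hhw
      have heK : σ (σ (g • w) • (g • (k⁻¹ • y))) ∈ K :=
        hFK (Or.inr ⟨(g • w, g • (k⁻¹ • y)), hg, rfl⟩)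
      refine ⟨k * (σ (g • w) * g)⁻¹ * (σ (σ (g • w) • (g • (k⁻¹ • y))))⁻¹,
        mul_mem (mul_mem hk (inv_mem hhK)) (inv_mem heK),
        (σ (σ (g • w) • (g • (k⁻¹ • y))) * (σ (g • w) * g * k⁻¹)) • y, ?_, ?_⟩
      · have h3 : (σ (g • w) * g * k⁻¹) • y = σ (g • w) • (g • (k⁻¹ • y)) := by
          rw [mul_smul, mul_smul]
        rw [mul_smul, h3]
        exact hσ _
      · rw [← mul_smul,
          show k * (σ (g • w) * g)⁻¹ * (σ (σ (g • w) • (g • (k⁻¹ • y))))⁻¹ *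
            (σ (σ (g • w) • (g • (k⁻¹ • y))) * (σ (g • w) * g * k⁻¹)) = 1 from by group,
          one_smul]
    have walkP : ∀ (x y : V), Γ.Walk x y →
        (∃ k : G, k ∈ K ∧ ∃ w ∈ s, x = k • w) →
        ∃ k : G, k ∈ K ∧ ∃ w ∈ s, y = k • w := by
      intro x y p
      induction p with
      | nil => exact id
      | cons hadj _ ih => exact fun hx => ih (step _ _ hadj hx)
    intro y
    obtain ⟨p⟩ := hconn.preconnected v₀ y
    exact walkP _ _ p ⟨1, one_mem _, v₀, Set.mem_insert _ _, (one_smul G v₀).symm⟩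
  have hKtop : ∀ g : G, g ∈ K := by
    intro g
    obtain ⟨k, hk, w, hw, hgv⟩ := main (g • v₀)
    have h1 : (k⁻¹ * g) • v₀ = w := by rw [mul_smul, hgv, inv_smul_smul]
    have h2 : k⁻¹ * g ∈ K := lem1 _ _ (Set.mem_insert _ _) (by rw [h1]; exact hw)
    simpa using mul_mem hk h2
  have hγex : ∀ w : V, ∃ g : G, ¬IsCompact ((stabilizer G w : Subgroup G) : Set G) →
      ∃ H ∈ ℋ, stabilizer G w = conjSubgroup g H := by
    intro w
    by_cases hcomp : IsCompact ((stabilizer G w : Subgroup G) : Set G)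
    · exact ⟨1, fun h => absurd hcomp h⟩
    · obtain ⟨H, hH, g, hg⟩ := (hclass w).resolve_left hcomp
      exact ⟨g, fun _ => ⟨H, hH, hg⟩⟩
  choose γ hγ using hγex
  set B : Set G := ⋃ w ∈ {w ∈ s | IsCompact ((stabilizer G w : Subgroup G) : Set G)},
    ((stabilizer G w : Subgroup G) : Set G) with hB
  refine ⟨(F ∪ γ '' s) ∪ B, ?_, ?_⟩
  · refine IsCompact.union ?_ ?_
    · exact (hFfin.union (hsfin.image γ)).isCompact
    · exact (hsfin.sep _).isCompact_biUnion fun w hw => hw.2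
  · have hle : K ≤ Subgroup.closure (((F ∪ γ '' s) ∪ B) ∪ ⋃ H ∈ ℋ, ((H : Subgroup G) : Set G)) := by
      rw [hK]
      refine (Subgroup.closure_le _).2 ?_
      rintro x (hx | hx)
      · obtain ⟨w, hw, hxw⟩ := Set.mem_iUnion₂.1 hx
        by_cases hcomp : IsCompact ((stabilizer G w : Subgroup G) : Set G)
        · exact Subgroup.subset_closure
            (Or.inl (Or.inr (Set.mem_biUnion ⟨hw, hcomp⟩ hxw)))
        · obtain ⟨H, hH, hgH⟩ := hγ w hcomp
          rw [hgH] at hxw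
          obtain ⟨h, hh, rfl⟩ := mem_conjSubgroup_iff.1 (SetLike.mem_coe.1 hxw)
          have h1 : γ w ∈ Subgroup.closure (((F ∪ γ '' s) ∪ B) ∪
              ⋃ H ∈ ℋ, ((H : Subgroup G) : Set G)) :=
            Subgroup.subset_closure (Or.inl (Or.inl (Or.inr ⟨w, hw, rfl⟩)))
          have h2 : h ∈ Subgroup.closure (((F ∪ γ '' s) ∪ B) ∪
              ⋃ H ∈ ℋ, ((H : Subgroup G) : Set G)) :=
            Subgroup.subset_closure (Or.inr (Set.mem_biUnion hH hh))
          exact mul_mem (mul_mem h1 h2) (inv_mem h1)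
      · exact Subgroup.subset_closure (Or.inl (Or.inl (Or.inl hx)))
    rw [eq_top_iff]
    exact fun g _ => hle (hKtop g)


theorem graph_of_generation [TopologicalSpace G] [IsTopologicalGroup G]
    {U : Subgroup G} (hUc : IsCompact (U : Set G)) (hUo : IsOpen (U : Set G))
    {ℋ : Finset (Subgroup G)}
    (hℋo : ∀ H ∈ ℋ, IsOpen ((H : Subgroup G) : Set G))
    (hℋconj : ∀ H ∈ ℋ, ∀ K ∈ ℋ, ¬IsCompact ((H : Subgroup G) : Set G) →
      ¬IsCompact ((K : Subgroup G) : Set G) → (∃ g : G, conjSubgroup g H = K) → H = K)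
    {S : Set G} (hS : IsCompact S)
    (hgen : Subgroup.closure (S ∪ ⋃ H ∈ ℋ, ((H : Subgroup G) : Set G)) = ⊤) :
    ∃ (V : Type u) (inst : MulAction G V) (Γ : SimpleGraph V),
      @IsCayleyAbelsGraph G _ _ V inst ℋ Γ := by
  classical
  set M : Set G := (U : Set G) * S * (U : Set G) with hM
  set N : Set G := M ∪ M⁻¹ with hNdef
  have hNsymm : ∀ x ∈ N, x⁻¹ ∈ N := by
    rintro x (hx | hx)
    · exact Or.inr (Set.inv_mem_inv.2 hx)
    · exact Or.inl (by rwa [Set.mem_inv] at hx)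
  set Γ : SimpleGraph (cagVert G U ℋ) := cagGraph U ℋ N hNsymm with hΓ
  have hact : IsGraphAction G Γ := by
    rintro g (a | ⟨H, b⟩) (a' | ⟨H', b'⟩) h
    · obtain ⟨hne, x, y, hx, hy, hxy⟩ := h
      simp only [smul_inl]
      refine ⟨fun hcon => hne (MulAction.injective g hcon), g * x, g * y, ?_, ?_, ?_⟩
      · rw [← hx]; rfl
      · rw [← hy]; rfl
      · rwa [show (g * x)⁻¹ * (g * y) = x⁻¹ * y from by group]
    · obtain ⟨x, y, hx, hy, hxy⟩ := h
      simp only [smul_inl, smul_inr, smul_sigmaMk]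
      refine ⟨g * x, g * y, ?_, ?_, ?_⟩
      · rw [← hx]; rfl
      · rw [← hy]; rfl
      · rwa [show (g * x)⁻¹ * (g * y) = x⁻¹ * y from by group]
    · obtain ⟨x, y, hx, hy, hxy⟩ := h
      simp only [smul_inl, smul_inr, smul_sigmaMk]
      refine ⟨g * x, g * y, ?_, ?_, ?_⟩
      · rw [← hx]; rfl
      · rw [← hy]; rfl
      · rwa [show (g * x)⁻¹ * (g * y) = x⁻¹ * y from by group]
    · exact h.elim
  have key : ∀ g : G, Γ.Reachable (Sum.inl (QuotientGroup.mk 1)) (Sum.inl (QuotientGroup.mk g)) := by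
    intro g
    have hg : g ∈ Subgroup.closure (S ∪ ⋃ H ∈ ℋ, ((H : Subgroup G) : Set G)) := by
      rw [hgen]; trivial
    induction hg using Subgroup.closure_induction with
    | mem x hx =>
      rcases hx with hx | hx
      · by_cases hq : (QuotientGroup.mk x : G ⧸ U) = QuotientGroup.mk 1
        · rw [← hq]
        · refine SimpleGraph.Adj.reachable ?_
          have hxM : x ∈ M := by
            rw [hM]
            simpa using Set.mul_mem_mul (Set.mul_mem_mul U.one_mem hx) U.one_mem
          exact ⟨fun hcon => hq hcon.symm, 1, x, rfl, rfl, by rw [inv_one, one_mul]; exact Or.inl hxM⟩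
      · obtain ⟨H, hH, hxH⟩ := Set.mem_iUnion₂.1 hx
        have e1 : Γ.Adj (Sum.inl (QuotientGroup.mk 1))
            (Sum.inr ⟨⟨H, hH⟩, QuotientGroup.mk 1⟩) :=
          ⟨1, 1, rfl, rfl, by simpa using Set.mul_mem_mul U.one_mem H.one_mem⟩
        have e2 : Γ.Adj (Sum.inr ⟨⟨H, hH⟩, QuotientGroup.mk 1⟩)
            (Sum.inl (QuotientGroup.mk x)) :=
          ⟨x, 1, rfl, rfl, by simpa using Set.mul_mem_mul U.one_mem (inv_mem hxH)⟩
        exact e1.reachable.trans e2.reachable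
    | one => exact SimpleGraph.Reachable.refl _
    | mul x y hxmem hymem ihx ihy =>
      have h1 := reachable_smul hact x ihy
      simp only [smul_inl, MulAction.Quotient.smul_mk, smul_eq_mul, mul_one] at h1
      exact ihx.trans h1
    | inv x hxmem ih =>
      have h1 := reachable_smul hact x⁻¹ ih
      simp only [smul_inl, MulAction.Quotient.smul_mk, smul_eq_mul, mul_one,
        inv_mul_cancel] at h1
      exact h1.symm
  have reach_all : ∀ v : cagVert G U ℋ, Γ.Reachable (Sum.inl (QuotientGroup.mk 1)) v := by
    rintro (a | ⟨H, b⟩)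
    · obtain ⟨x, rfl⟩ := QuotientGroup.mk_surjective a
      exact key x
    · obtain ⟨y, rfl⟩ := QuotientGroup.mk_surjective b
      exact (key y).trans (SimpleGraph.Adj.reachable
        ⟨y, y, rfl, rfl, by simpa using Set.mul_mem_mul U.one_mem H.val.one_mem⟩)
  have hconn : Γ.Connected := by
    haveI : Nonempty (cagVert G U ℋ) := ⟨Sum.inl (QuotientGroup.mk 1)⟩
    exact SimpleGraph.Connected.mk fun u v => (reach_all u).symm.trans (reach_all v)
  have stab_l : ∀ x : G,
      stabilizer G (Sum.inl (QuotientGroup.mk x) : cagVert G U ℋ) = conjSubgroup x U := by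
    intro x; rw [stabilizer_inl, stabilizer_mk]
  have stab_r : ∀ (H : {H : Subgroup G // H ∈ ℋ}) (x : G),
      stabilizer G (Sum.inr ⟨H, QuotientGroup.mk x⟩ : cagVert G U ℋ) = conjSubgroup x H.val := by
    intro H x; rw [stabilizer_inr, stabilizer_sigmaMk, stabilizer_mk]
  have hdisc : IsDiscreteAction G Γ := by
    rintro (a | ⟨H, b⟩)
    · obtain ⟨x, rfl⟩ := QuotientGroup.mk_surjective a
      rw [stab_l]
      exact isOpen_conjSubgroup hUo x
    · obtain ⟨x, rfl⟩ := QuotientGroup.mk_surjective b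
      rw [stab_r]
      exact isOpen_conjSubgroup (hℋo _ H.prop) x
  have stabCompL : ∀ a : G ⧸ U,
      IsCompact ((stabilizer G (Sum.inl a : cagVert G U ℋ) : Subgroup G) : Set G) := by
    intro a; obtain ⟨x, rfl⟩ := QuotientGroup.mk_surjective a
    rw [stab_l]; exact isCompact_conjSubgroup hUc x
  have stabClosed : ∀ v : cagVert G U ℋ, IsClosed ((stabilizer G v : Subgroup G) : Set G) :=
    fun v => Subgroup.isClosed_of_isOpen _ (hdisc v)
  have hcocomp : IsCocompactAction G Γ := by
    constructor
    · refine ⟨{(Sum.inl (QuotientGroup.mk 1) : cagVert G U ℋ)} ∪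
        (fun H : {H : Subgroup G // H ∈ ℋ} =>
          (Sum.inr ⟨H, QuotientGroup.mk 1⟩ : cagVert G U ℋ)) '' Set.univ,
        (Set.finite_singleton _).union (Set.finite_univ.image _), ?_⟩
      rintro (a | ⟨H, b⟩)
      · obtain ⟨x, rfl⟩ := QuotientGroup.mk_surjective a
        refine ⟨x⁻¹, Or.inl ?_⟩
        simp only [smul_inl, MulAction.Quotient.smul_mk, smul_eq_mul, inv_mul_cancel]
        rfl
      · obtain ⟨x, rfl⟩ := QuotientGroup.mk_surjective b
        refine ⟨x⁻¹, Or.inr ⟨H, Set.mem_univ H, ?_⟩⟩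
        simp only [smul_inr, smul_sigmaMk, MulAction.Quotient.smul_mk, smul_eq_mul,
          inv_mul_cancel]
    · have hNc : IsCompact N := by
        rw [hNdef, hM]
        exact (((hUc.mul hS).mul hUc)).union (((hUc.mul hS).mul hUc)).inv
      have hQfin : ((fun n : G => (QuotientGroup.mk n : G ⧸ U)) '' N).Finite := by
        obtain ⟨Fs, hFsN, hFsfin, hsub⟩ := hNc.elim_finite_subcover_image
          (fun n _ => isOpenMap_mul_left n _ hUo)
          (fun n hn => Set.mem_biUnion hn ⟨1, U.one_mem, mul_one n⟩)
        refine (hFsfin.image (fun n => (QuotientGroup.mk n : G ⧸ U))).subset ?_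
        rintro q ⟨n, hn, rfl⟩
        obtain ⟨f, hf, u, hu, hfu⟩ := Set.mem_iUnion₂.1 (hsub hn)
        exact ⟨f, hf, QuotientGroup.eq.2 (by rw [← hfu, inv_mul_cancel_left]; exact hu)⟩
      refine ⟨((fun q : G ⧸ U => ((Sum.inl (QuotientGroup.mk 1) : cagVert G U ℋ),
          (Sum.inl q : cagVert G U ℋ))) '' ((fun n : G => (QuotientGroup.mk n : G ⧸ U)) '' N)) ∪
          ((fun H : {H : Subgroup G // H ∈ ℋ} =>
            ((Sum.inl (QuotientGroup.mk 1) : cagVert G U ℋ),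
             (Sum.inr ⟨H, QuotientGroup.mk 1⟩ : cagVert G U ℋ))) '' Set.univ) ∪
          ((fun H : {H : Subgroup G // H ∈ ℋ} =>
            ((Sum.inr ⟨H, QuotientGroup.mk 1⟩ : cagVert G U ℋ),
             (Sum.inl (QuotientGroup.mk 1) : cagVert G U ℋ))) '' Set.univ),
        ((hQfin.image _).union (Set.finite_univ.image _)).union (Set.finite_univ.image _), ?_⟩
      rintro (a | ⟨H, b⟩) (a' | ⟨H', b'⟩) h
      · obtain ⟨hne, x, y, hx, hy, hxy⟩ := h
        subst hx; subst hy
        refine ⟨x⁻¹, Or.inl (Or.inl ⟨QuotientGroup.mk (x⁻¹ * y), ⟨x⁻¹ * y, hxy, rfl⟩, ?_⟩)⟩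
        simp only [smul_inl, MulAction.Quotient.smul_mk, smul_eq_mul, inv_mul_cancel]
      · obtain ⟨x, y, hx, hy, hxy⟩ := h
        subst hx; subst hy
        obtain ⟨u, hu, hh, hhH, huh⟩ := hxy
        have halg : hh * y⁻¹ * x = u⁻¹ := by
          have : y⁻¹ * x = (x⁻¹ * y)⁻¹ := by group
          rw [mul_assoc, this, ← huh]; group
        refine ⟨hh * y⁻¹, Or.inl (Or.inr ⟨H', Set.mem_univ H', ?_⟩)⟩
        have e1 : (QuotientGroup.mk (hh * y⁻¹ * x) : G ⧸ U) = QuotientGroup.mk 1 := by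
          rw [halg]
          exact QuotientGroup.eq.2 (by simpa using hu)
        have e2 : (QuotientGroup.mk (hh * y⁻¹ * y) : G ⧸ H'.val) = QuotientGroup.mk 1 := by
          rw [inv_mul_cancel_right]
          exact QuotientGroup.eq.2 (by simpa using inv_mem hhH)
        simp only [smul_inl, smul_inr, smul_sigmaMk, MulAction.Quotient.smul_mk, smul_eq_mul]
        rw [e1, e2]
      · obtain ⟨x, y, hx, hy, hxy⟩ := h
        subst hx; subst hy
        obtain ⟨u, hu, hh, hhH, huh⟩ := hxy
        have halg : hh * y⁻¹ * x = u⁻¹ := by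
          have : y⁻¹ * x = (x⁻¹ * y)⁻¹ := by group
          rw [mul_assoc, this, ← huh]; group
        refine ⟨hh * y⁻¹, Or.inr ⟨H, Set.mem_univ H, ?_⟩⟩
        have e1 : (QuotientGroup.mk (hh * y⁻¹ * x) : G ⧸ U) = QuotientGroup.mk 1 := by
          rw [halg]
          exact QuotientGroup.eq.2 (by simpa using hu)
        have e2 : (QuotientGroup.mk (hh * y⁻¹ * y) : G ⧸ H.val) = QuotientGroup.mk 1 := by
          rw [inv_mul_cancel_right]
          exact QuotientGroup.eq.2 (by simpa using inv_mem hhH)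
        simp only [smul_inl, smul_inr, smul_sigmaMk, MulAction.Quotient.smul_mk, smul_eq_mul]
        rw [e1, e2]
      · exact h.elim
  refine ⟨cagVert G U ℋ, inferInstance, Γ, hact, hconn, hdisc, hcocomp, ?_, ?_, ?_, ?_⟩
  · -- compact edge stabilizers
    rintro (a | ⟨H, b⟩) (a' | ⟨H', b'⟩) h
    · exact IsCompact.of_isClosed_subset (stabCompL a)
        (by rw [Subgroup.coe_inf]; exact (stabClosed _).inter (stabClosed _))
        (by rw [Subgroup.coe_inf]; exact Set.inter_subset_left)
    · exact IsCompact.of_isClosed_subset (stabCompL a)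
        (by rw [Subgroup.coe_inf]; exact (stabClosed _).inter (stabClosed _))
        (by rw [Subgroup.coe_inf]; exact Set.inter_subset_left)
    · exact IsCompact.of_isClosed_subset (stabCompL a')
        (by rw [Subgroup.coe_inf]; exact (stabClosed _).inter (stabClosed _))
        (by rw [Subgroup.coe_inf]; exact Set.inter_subset_right)
    · exact h.elim
  · rintro (a | ⟨H, b⟩)
    · exact Or.inl (stabCompL a)
    · obtain ⟨x, rfl⟩ := QuotientGroup.mk_surjective b
      exact Or.inr ⟨H.val, H.prop, x, stab_r H x⟩
  · intro H hH
    exact ⟨Sum.inr ⟨⟨H, hH⟩, QuotientGroup.mk 1⟩, by rw [stab_r]; exact conjSubgroup_one H⟩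
  · intro H hH hHnc u v hu hv
    rcases u with a | ⟨H₁, b⟩
    · exact absurd (by rw [← hu]; exact stabCompL a) hHnc
    rcases v with a' | ⟨H₂, d⟩
    · exact absurd (by rw [← hv]; exact stabCompL a') hHnc
    obtain ⟨x, rfl⟩ := QuotientGroup.mk_surjective b
    obtain ⟨y, rfl⟩ := QuotientGroup.mk_surjective d
    rw [stab_r] at hu hv
    have h₁nc : ¬IsCompact ((H₁.val : Subgroup G) : Set G) := fun hc =>
      hHnc (by rw [← hu]; exact isCompact_conjSubgroup hc x)
    have h₂nc : ¬IsCompact ((H₂.val : Subgroup G) : Set G) := fun hc =>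
      hHnc (by rw [← hv]; exact isCompact_conjSubgroup hc y)
    have e₁ : H₁.val = H := hℋconj H₁.val H₁.prop H hH h₁nc hHnc ⟨x, hu⟩
    have e₂ : H₂.val = H := hℋconj H₂.val H₂.prop H hH h₂nc hHnc ⟨y, hv⟩
    obtain rfl : H₁ = H₂ := Subtype.ext (e₁.trans e₂.symm)
    refine ⟨y * x⁻¹, ?_⟩
    simp only [smul_inr, smul_sigmaMk, MulAction.Quotient.smul_mk, smul_eq_mul,
      inv_mul_cancel_right]

end CAGAux
end CAGAuxSection

/-- Topological characterization of relative compact generation: for a proper pair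
`(G, ℋ)`, `G` is compactly generated relative to `ℋ` iff there exists a Cayley-Abels
graph of `G` with respect to `ℋ`. -/
theorem compactlyGeneratedRel_iff_exists_cayleyAbelsGraph
    {G : Type u} [Group G] [TopologicalSpace G] [IsTopologicalGroup G] [T2Space G]
    (ℋ : Finset (Subgroup G)) (hpp : IsProperPair G ℋ) :
    (∃ S : Set G, IsCompact S ∧
        Subgroup.closure (S ∪ ⋃ H ∈ ℋ, ((H : Subgroup G) : Set G)) = ⊤) ↔
      (∃ (V : Type u) (inst : MulAction G V) (Γ : SimpleGraph V),
        @IsCayleyAbelsGraph G _ _ V inst ℋ Γ) := by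
  obtain ⟨⟨U, hUc, hUo⟩, hℋo, hℋconj⟩ := hpp
  constructor
  · rintro ⟨S, hS, hgen⟩
    exact CAGAux.graph_of_generation hUc hUo hℋo hℋconj hS hgen
  · rintro ⟨V, inst, Γ, hCA⟩
    letI := inst
    exact CAGAux.generation_of_graph hCA
end

section
/- Let G be a Hausdorff, locally compact, totally disconnected topological group acting by graph automorphisms on a connected, locally finite simple graph Γ such that the stabilizer of every vertex is a compact open subgroup of G and there are only finitely many G-orbits of vertices. Then G is compactly generated. -/
open MulAction

universe u v

/-- Kron–Möller: a totally disconnected locally compact group acting on a connected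
locally finite graph with compact open vertex stabilizers and finitely many orbits of
vertices is compactly generated. -/
theorem isCompactlyGenerated_of_action_on_locallyFinite_graph
    {G : Type u} [Group G] [TopologicalSpace G] [IsTopologicalGroup G] [T2Space G]
    [LocallyCompactSpace G] [TotallyDisconnectedSpace G]
    {V : Type v} [MulAction G V] (Γ : SimpleGraph V)
    (hact : IsGraphAction G Γ) (hconn : Γ.Connected)
    (hlf : ∀ v : V, (Γ.neighborSet v).Finite)
    (hstab : ∀ v : V, IsCompact ((stabilizer G v : Subgroup G) : Set G) ∧
      IsOpen ((stabilizer G v : Subgroup G) : Set G))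
    (horb : ∃ s : Set V, s.Finite ∧ ∀ v : V, ∃ g : G, g • v ∈ s) :
    IsCompactlyGeneratedGroup G := by
  classical
  obtain ⟨s, hsfin, hs⟩ := horb
  obtain ⟨v0⟩ := hconn.nonempty
  obtain ⟨g0, hg0⟩ := hs v0
  set w0 : V := g0 • v0 with hw0
  -- the "normalizing" map: sends each vertex into s
  set τ : V → G := fun v => if v ∈ s then 1 else Classical.choose (hs v) with hτdef
  have hτ : ∀ v : V, τ v • v ∈ s := by
    intro v
    by_cases h : v ∈ s
    · simpa [hτdef, h] using h
    · simpa [hτdef, h] using Classical.choose_spec (hs v)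
  have hτs : ∀ v ∈ s, τ v = 1 := by intro v hv; simp [hτdef, hv]
  -- transition elements between vertices of s in the same orbit
  set k : V → V → G := fun a b => if h : ∃ g : G, g • a = b then h.choose else 1
    with hkdef
  have hk : ∀ a b : V, (∃ g : G, g • a = b) → k a b • a = b := by
    intro a b h
    simp only [hkdef, dif_pos h]
    exact h.choose_spec
  -- the finite set of neighbours of s
  set N : Set V := ⋃ a ∈ s, Γ.neighborSet a with hNdef
  have hNfin : N.Finite := hsfin.biUnion fun a _ => hlf a
  -- the generating set
  set S : Set G := ((⋃ a ∈ s, ((stabilizer G a : Subgroup G) : Set G)) ∪ τ '' N) ∪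
      ((fun p : V × V => k p.1 p.2) '' (s ×ˢ s)) with hSdef
  have hScompact : IsCompact S := by
    refine IsCompact.union (IsCompact.union ?_ ?_) ?_
    · exact hsfin.isCompact_biUnion fun a _ => (hstab a).1
    · exact (hNfin.image τ).isCompact
    · exact ((hsfin.prod hsfin).image _).isCompact
  set H : Subgroup G := Subgroup.closure S with hHdef
  have hstabH : ∀ a ∈ s, ∀ g ∈ stabilizer G a, g ∈ H := by
    intro a ha g hg
    apply Subgroup.subset_closure
    exact Or.inl (Or.inl (Set.mem_biUnion ha hg))
  have hkH : ∀ a ∈ s, ∀ b ∈ s, k a b ∈ H := by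
    intro a ha b hb
    apply Subgroup.subset_closure
    exact Or.inr ⟨(a, b), Set.mk_mem_prod ha hb, rfl⟩
  have hτNH : ∀ b ∈ N, τ b ∈ H := by
    intro b hb
    apply Subgroup.subset_closure
    exact Or.inl (Or.inr ⟨b, hb, rfl⟩)
  -- key step along an edge
  have step : ∀ u v : V, Γ.Adj u v → τ u ∈ H → τ v ∈ H := by
    intro u v huv huH
    have hab : Γ.Adj (τ u • u) (τ u • v) := hact (τ u) u v huv
    have hbN : (τ u • v) ∈ N := Set.mem_biUnion (hτ u) hab
    set h : G := τ (τ u • v) * τ u with hhdef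
    have hhH : h ∈ H := mul_mem (hτNH _ hbN) huH
    have hhv : h • v ∈ s := by
      have : h • v = τ (τ u • v) • (τ u • v) := by rw [hhdef, mul_smul]
      rw [this]; exact hτ _
    have hex : ∃ g : G, g • (h • v) = τ v • v := ⟨τ v * h⁻¹, by
      rw [mul_smul, inv_smul_smul]⟩
    set k' : G := k (h • v) (τ v • v) with hk'def
    have hk' : k' • (h • v) = τ v • v := hk _ _ hex
    have hk'H : k' ∈ H := hkH _ hhv _ (hτ v)
    have hstabmem : k'⁻¹ * τ v * h⁻¹ ∈ stabilizer G (h • v) := by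
      rw [mem_stabilizer_iff]
      rw [mul_smul, mul_smul, inv_smul_smul, ← hk', inv_smul_smul]
    have : k'⁻¹ * τ v * h⁻¹ ∈ H := hstabH _ hhv _ hstabmem
    have : k' * (k'⁻¹ * τ v * h⁻¹) * h ∈ H := mul_mem (mul_mem hk'H this) hhH
    simpa [mul_assoc] using this
  -- τ v ∈ H for every v, by induction on a walk from w0
  have hwalk : ∀ (x y : V) (_ : Γ.Walk x y), τ x ∈ H → τ y ∈ H := by
    intro x y p
    induction p with
    | nil => exact fun h => h
    | cons hadj q ih => exact fun h => ih (step _ _ hadj h)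
  have hτH : ∀ v : V, τ v ∈ H := by
    intro v
    have h0 : τ w0 ∈ H := by rw [hτs w0 hg0]; exact one_mem H
    exact hwalk w0 v (hconn w0 v).some h0
  -- conclude
  refine ⟨S, hScompact, ?_⟩
  rw [← hHdef, eq_top_iff]
  intro g _
  have hτg : τ (g • w0) ∈ H := hτH (g • w0)
  have hexg : ∃ g' : G, g' • w0 = τ (g • w0) • (g • w0) := ⟨τ (g • w0) * g, by
    rw [mul_smul]⟩
  set k' : G := k w0 (τ (g • w0) • (g • w0)) with hk'def
  have hk' : k' • w0 = τ (g • w0) • (g • w0) := hk _ _ hexg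
  have hk'H : k' ∈ H := hkH _ hg0 _ (hτ _)
  have hstabmem : k'⁻¹ * (τ (g • w0) * g) ∈ stabilizer G w0 := by
    rw [mem_stabilizer_iff, mul_smul, mul_smul, ← hk', inv_smul_smul]
  have h1 : k'⁻¹ * (τ (g • w0) * g) ∈ H := hstabH _ hg0 _ hstabmem
  have h2 : (τ (g • w0))⁻¹ * k' * (k'⁻¹ * (τ (g • w0) * g)) ∈ H :=
    mul_mem (mul_mem (inv_mem hτg) hk'H) h1
  simpa [mul_assoc] using h2
end

section
/- Let G be a Hausdorff topological group acting by graph automorphisms on a connected simple graph K such that every vertex stabilizer is open, there are finitely many G-orbits of vertices and finitely many G-orbits of edges, and the pointwise stabilizer of every edge is compact. Then for every vertex v of K incident to at least one edge, v has infinite degree if and only if its stabilizer G_v is not compact. -/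
open MulAction

universe u v

/-- For a connected `G`-graph with discrete cocompact action and compact pointwise edge
stabilizers, a vertex incident to an edge has infinite degree iff its stabilizer is not
compact. -/
theorem infinite_degree_iff_not_isCompact_stabilizer
    {G : Type u} [Group G] [TopologicalSpace G] [IsTopologicalGroup G] [T2Space G]
    {V : Type v} [MulAction G V] (K : SimpleGraph V)
    (hact : IsGraphAction G K) (hconn : K.Connected)
    (hdisc : IsDiscreteAction G K)
    (hcc : IsCocompactAction G K)
    (hedge : HasCompactEdgeStabilizers G K)
    (v : V) (hv : ∃ w : V, K.Adj v w) :
    (K.neighborSet v).Infinite ↔ ¬ IsCompact ((stabilizer G v : Subgroup G) : Set G) := by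
  classical
  open Pointwise in
  suffices h : (K.neighborSet v).Finite ↔ IsCompact ((stabilizer G v : Subgroup G) : Set G) by
    constructor
    · intro hinf hc
      exact hinf (h.mpr hc)
    · intro hnc
      intro hfin
      exact hnc (h.mp hfin)
  constructor
  · -- finite neighbours → compact stabilizer
    intro hfin
    obtain ⟨w, hw⟩ := hv
    set C : Set G := ((stabilizer G v ⊓ stabilizer G w : Subgroup G) : Set G) with hCdef
    have hC : IsCompact C := hedge v w hw
    set T : Set V := (fun g : G => g • w) '' ((stabilizer G v : Subgroup G) : Set G) with hTdef
    have hTsub : T ⊆ K.neighborSet v := by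
      rintro y ⟨g, hg, rfl⟩
      have hg' : g • v = v := hg
      have := hact g v w hw
      rwa [hg'] at this
    have hT : T.Finite := hfin.subset hTsub
    -- choice of representatives
    let rep : V → G := fun y =>
      if h : ∃ g : G, g ∈ ((stabilizer G v : Subgroup G) : Set G) ∧ g • w = y then h.choose else 1
    have hcover : ((stabilizer G v : Subgroup G) : Set G) ⊆ ⋃ y ∈ T, rep y • C := by
      intro g hg
      have hy : g • w ∈ T := ⟨g, hg, rfl⟩
      have hex : ∃ g' : G, g' ∈ ((stabilizer G v : Subgroup G) : Set G) ∧ g' • w = g • w :=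
        ⟨g, hg, rfl⟩
      have hrep : rep (g • w) = hex.choose := dif_pos hex
      obtain ⟨hg0v, hg0w⟩ := hex.choose_spec
      refine Set.mem_biUnion hy ?_
      rw [hrep]
      refine Set.mem_smul_set.2 ⟨hex.choose⁻¹ * g, ?_, by rw [smul_eq_mul]; group⟩
      have h1 : hex.choose⁻¹ * g ∈ stabilizer G v := by
        refine mem_stabilizer_iff.2 ?_
        rw [mul_smul, mem_stabilizer_iff.1 hg, inv_smul_eq_iff]
        exact (mem_stabilizer_iff.1 hg0v).symm
      have h2 : hex.choose⁻¹ * g ∈ stabilizer G w := by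
        refine mem_stabilizer_iff.2 ?_
        rw [mul_smul, inv_smul_eq_iff]
        exact hg0w.symm
      exact Subgroup.mem_inf.2 ⟨h1, h2⟩
    have hclosed : IsClosed ((stabilizer G v : Subgroup G) : Set G) :=
      (stabilizer G v).isClosed_of_isOpen (hdisc v)
    have hcpt : IsCompact (⋃ y ∈ T, rep y • C) :=
      hT.isCompact_biUnion fun y _ => hC.smul (rep y)
    exact hcpt.of_isClosed_subset hclosed hcover
  · -- compact stabilizer → finite neighbours
    intro hcomp
    obtain ⟨-, t, ht, hcov⟩ := hcc
    -- orbits of the stabilizer of v are finite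
    have orb_fin : ∀ u : V,
        ((fun g : G => g • u) '' ((stabilizer G v : Subgroup G) : Set G)).Finite := by
      intro u
      have hcover : ((stabilizer G v : Subgroup G) : Set G) ⊆
          ⋃ g : G, g • ((stabilizer G u : Subgroup G) : Set G) := by
        intro g hg
        exact Set.mem_iUnion.2 ⟨g, Set.mem_smul_set.2 ⟨1, (stabilizer G u).one_mem, by simp⟩⟩
      obtain ⟨s, hs⟩ := hcomp.elim_finite_subcover _ (fun g => (hdisc u).smul g) hcover
      have : ((fun g : G => g • u) '' ((stabilizer G v : Subgroup G) : Set G)) ⊆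
          (fun g : G => g • u) '' (s : Set G) := by
        rintro y ⟨g, hg, rfl⟩
        obtain ⟨g₀, hg₀s, hmem⟩ := Set.mem_iUnion₂.1 (hs hg)
        obtain ⟨h, hh, rfl⟩ := Set.mem_smul_set.1 hmem
        exact ⟨g₀, hg₀s, by simp only [smul_eq_mul, mul_smul, mem_stabilizer_iff.1 hh]⟩
      exact (s.finite_toSet.image _).subset this
    -- pair assignment
    let gg : V → G := fun x => if h : K.Adj v x then (hcov v x h).choose else 1
    let P : V → V × V := fun x => (gg x • v, gg x • x)
    have hPmem : ∀ x ∈ K.neighborSet v, P x ∈ t := by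
      intro x hx
      have hx' : K.Adj v x := hx
      have : gg x = (hcov v x hx').choose := dif_pos hx'
      rw [show P x = (gg x • v, gg x • x) from rfl, this]
      exact (hcov v x hx').choose_spec
    have : K.neighborSet v ⊆ ⋃ q ∈ t, {x ∈ K.neighborSet v | P x = q} := by
      intro x hx
      exact Set.mem_biUnion (hPmem x hx) ⟨hx, rfl⟩
    refine Set.Finite.subset (ht.biUnion fun q hq => ?_) this
    by_cases hne : {x ∈ K.neighborSet v | P x = q}.Nonempty
    · obtain ⟨x₀, hx₀n, hx₀p⟩ := hne
      refine ((orb_fin x₀).subset ?_)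
      rintro x ⟨hxn, hxp⟩
      have h1 : gg x • v = gg x₀ • v := by
        have := hxp.trans hx₀p.symm
        exact congrArg Prod.fst this
      have h2 : gg x • x = gg x₀ • x₀ := by
        have := hxp.trans hx₀p.symm
        exact congrArg Prod.snd this
      refine ⟨(gg x)⁻¹ * gg x₀, ?_, ?_⟩
      · refine mem_stabilizer_iff.2 ?_
        rw [mul_smul, ← h1, inv_smul_smul]
      · show ((gg x)⁻¹ * gg x₀) • x₀ = x
        rw [mul_smul, ← h2, inv_smul_smul]
    · rw [Set.not_nonempty_iff_eq_empty] at hne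
      rw [hne]; exact Set.finite_empty
end

section
/- Let G be a Hausdorff topological group acting by graph automorphisms on a connected simple graph Γ such that every vertex stabilizer is open and the pointwise stabilizer of every edge is compact. Let x, y, z be vertices of Γ with x adjacent to y and y adjacent to z, and let u, v be adjacent vertices of Γ. Then the set B = { g·z : g ∈ G, g·x = u, g·y = v } is finite. -/
open MulAction

universe u v

/-- For a connected `G`-graph with discrete action and compact pointwise edge stabilizers,
given a 2-path `[x,y,z]` and an edge `{u,v}`, the set `{ g·z : g·x = u, g·y = v }` is
finite. -/
theorem finite_translates_of_corner
    {G : Type u} [Group G] [TopologicalSpace G] [IsTopologicalGroup G] [T2Space G]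
    {V : Type v} [MulAction G V] (Γ : SimpleGraph V)
    (hact : IsGraphAction G Γ) (hconn : Γ.Connected)
    (hdisc : IsDiscreteAction G Γ)
    (hedge : HasCompactEdgeStabilizers G Γ)
    (x y z u v : V) (hxy : Γ.Adj x y) (hyz : Γ.Adj y z) (huv : Γ.Adj u v) :
    {w : V | ∃ g : G, g • x = u ∧ g • y = v ∧ g • z = w}.Finite := by
  by_cases hS : ∃ g : G, g • x = u ∧ g • y = v
  · obtain ⟨g₀, hg₀x, hg₀y⟩ := hS
    have hK : IsCompact ((stabilizer G x ⊓ stabilizer G y : Subgroup G) : Set G) :=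
      hedge x y hxy
    set f : G → V := fun k => (g₀ * k) • z with hf
    have hopen : ∀ w : V, IsOpen (f ⁻¹' {w}) := by
      intro w
      rcases Set.eq_empty_or_nonempty (f ⁻¹' {w}) with h | ⟨k₀, hk₀⟩
      · simp [h]
      · have heq : f ⁻¹' {w} =
            (fun k => k₀⁻¹ * k) ⁻¹' ((stabilizer G z : Subgroup G) : Set G) := by
          ext k
          simp only [Set.mem_preimage, Set.mem_singleton_iff, SetLike.mem_coe,
            mem_stabilizer_iff]
          have hk₀' : f k₀ = w := hk₀
          constructor
          · intro hk
            have : (g₀ * k) • z = (g₀ * k₀) • z := by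
              show f k = f k₀
              rw [hk, hk₀']
            have hkz : k • z = k₀ • z := by
              rwa [mul_smul, mul_smul, smul_left_cancel_iff] at this
            rw [mul_smul, hkz, inv_smul_smul]
          · intro hk
            have hkz : k • z = k₀ • z := by
              have := congrArg (fun t => k₀ • t) hk
              simpa [mul_smul] using this
            show (g₀ * k) • z = w
            rw [mul_smul, hkz, ← mul_smul]
            exact hk₀' 
        rw [heq]
        exact (hdisc z).preimage (continuous_const.mul continuous_id)
    have hcover : ((stabilizer G x ⊓ stabilizer G y : Subgroup G) : Set G) ⊆
        ⋃ w : V, f ⁻¹' {w} := fun k _ => Set.mem_iUnion.2 ⟨f k, rfl⟩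
    obtain ⟨t, ht⟩ := hK.elim_finite_subcover (fun w : V => f ⁻¹' {w}) hopen hcover
    apply Set.Finite.subset t.finite_toSet
    rintro w' ⟨g, hgx, hgy, hgz⟩
    have hkmem : g₀⁻¹ * g ∈ (stabilizer G x ⊓ stabilizer G y : Subgroup G) := by
      refine Subgroup.mem_inf.2 ⟨?_, ?_⟩
      · rw [mem_stabilizer_iff, mul_smul, hgx, ← hg₀x, inv_smul_smul]
      · rw [mem_stabilizer_iff, mul_smul, hgy, ← hg₀y, inv_smul_smul]
    have := ht hkmem
    rw [Set.mem_iUnion₂] at this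
    obtain ⟨w'', hw''t, hw''⟩ := this
    have : f (g₀⁻¹ * g) = w'' := hw''
    have hfval : f (g₀⁻¹ * g) = w' := by
      show (g₀ * (g₀⁻¹ * g)) • z = w'
      rw [mul_inv_cancel_left, hgz]
    rw [hfval] at this
    rw [this]
    exact hw''t
  · convert Set.finite_empty
    ext w
    simp only [Set.mem_setOf_eq, Set.mem_empty_iff_false, iff_false]
    rintro ⟨g, h1, h2, _⟩
    exact hS ⟨g, h1, h2⟩
end

section
/- Let (G, ℋ) be a proper pair. Any two Cayley-Abels graphs of G with respect to ℋ are quasi-isometric; moreover, if one Cayley-Abels graph of G with respect to ℋ is fine, then every Cayley-Abels graph of G with respect to ℋ is fine. -/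
open MulAction

universe u v

set_option linter.unusedSectionVars false
set_option linter.unusedVariables false
open MulAction Set Pointwise


universe w

section Basics
variable {G : Type u} [Group G] [TopologicalSpace G] [IsTopologicalGroup G]

/-- Orbit of a point under a compact set of group elements is finite, provided the
stabilizer is open. -/
lemma finite_smulImg {V : Type v} [MulAction G V] {C : Set G} (hC : IsCompact C)
    {w : V} (hw : IsOpen ((stabilizer G w : Subgroup G) : Set G)) :
    ((fun g => g • w) '' C).Finite := by
  obtain ⟨b', hb'sub, hb'fin, hcov⟩ := hC.elim_finite_subcover_image
    (b := C) (c := fun g => g • ((stabilizer G w : Subgroup G) : Set G))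
    (fun g _ => hw.smul g)
    (fun g hg => Set.mem_biUnion hg ⟨1, Subgroup.one_mem _, mul_one g⟩)
  refine (hb'fin.image (fun g => g • w)).subset ?_
  rintro _ ⟨g, hg, rfl⟩
  obtain ⟨i, hi, s, hs, rfl⟩ := by
    have := hcov hg
    simpa using this
  refine ⟨i, hi, ?_⟩
  show i • w = (i * s) • w
  rw [mul_smul, (mem_stabilizer_iff).mp hs]

lemma finite_smulImg' {V : Type v} [MulAction G V] {C : Set G} (hC : IsCompact C)
    (hdisc : ∀ z : V, IsOpen ((stabilizer G z : Subgroup G) : Set G)) (w : V) :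
    {y : V | ∃ g ∈ C, y = g • w}.Finite := by
  refine (finite_smulImg hC (hdisc w)).subset ?_
  rintro y ⟨g, hg, rfl⟩; exact ⟨g, hg, rfl⟩

end Basics

section Basics2
variable {G : Type u} [Group G] [TopologicalSpace G] [IsTopologicalGroup G]

/-- conjugation homeomorphism image compactness -/
lemma isCompact_conj_image {K : Set G} (hK : IsCompact K) (g : G) :
    IsCompact ((fun x => g * x * g⁻¹) '' K) := by
  have : Continuous (fun x : G => g * x * g⁻¹) := by continuity
  exact hK.image this

lemma conj_set_eq (g : G) (K : Subgroup G) :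
    ((K.map (MulAut.conj g).toMonoidHom : Subgroup G) : Set G) = (fun x => g * x * g⁻¹) '' K := by
  ext x
  simp only [Subgroup.coe_map, MulEquiv.coe_toMonoidHom, MulAut.conj]
  rfl

lemma isCompact_conj_iff (g : G) (K : Subgroup G) :
    IsCompact ((K.map (MulAut.conj g).toMonoidHom : Subgroup G) : Set G) ↔
      IsCompact ((K : Set G)) := by
  constructor
  · intro h
    have h2 := isCompact_conj_image h g⁻¹
    rw [conj_set_eq] at h2
    convert h2 using 1
    ext x
    constructor
    · intro hx
      refine ⟨g * x * g⁻¹, Set.mem_image_of_mem _ hx, by group⟩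
    · rintro ⟨_, ⟨y, hy, rfl⟩, rfl⟩
      convert hy using 1
      group
  · intro h
    rw [conj_set_eq]
    exact isCompact_conj_image h g

lemma isCompact_stab_smul_iff {V : Type v} [MulAction G V] (g : G) (z : V) :
    IsCompact ((stabilizer G (g • z) : Subgroup G) : Set G) ↔
      IsCompact ((stabilizer G z : Subgroup G) : Set G) := by
  rw [stabilizer_smul_eq_stabilizer_map_conj]
  exact isCompact_conj_iff g _

/-- The transporter `{δ | δ • a = c ∧ δ • b = d}` is contained in a left coset of
`stabilizer a ⊓ stabilizer b`. -/
lemma transporter_subset {V : Type v} [MulAction G V] {a b c d : V} {δ₀ : G}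
    (h1 : δ₀ • a = c) (h2 : δ₀ • b = d) :
    {δ : G | δ • a = c ∧ δ • b = d} ⊆
      (fun s => δ₀ * s) '' ((stabilizer G a ⊓ stabilizer G b : Subgroup G) : Set G) := by
  rintro δ ⟨ha, hb⟩
  refine ⟨δ₀⁻¹ * δ, ?_, by group⟩
  constructor
  · show (δ₀⁻¹ * δ) • a = a
    rw [mul_smul, ha, ← h1, inv_smul_smul]
  · show (δ₀⁻¹ * δ) • b = b
    rw [mul_smul, hb, ← h2, inv_smul_smul]

/-- pinned images, `y = δ • x` version -/
lemma pin_smul_finite {V : Type v} {W : Type w} [MulAction G V] [MulAction G W]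
    (hdW : ∀ z : W, IsOpen ((stabilizer G z : Subgroup G) : Set G))
    {a b : V} (hE : IsCompact ((stabilizer G a ⊓ stabilizer G b : Subgroup G) : Set G))
    (c d : V) (x : W) :
    {y : W | ∃ δ : G, δ • a = c ∧ δ • b = d ∧ y = δ • x}.Finite := by
  by_cases hne : ∃ δ₀ : G, δ₀ • a = c ∧ δ₀ • b = d
  · obtain ⟨δ₀, h1, h2⟩ := hne
    have : {y : W | ∃ δ : G, δ • a = c ∧ δ • b = d ∧ y = δ • x} ⊆
        (fun z => δ₀ • z) '' ((fun s => s • x) ''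
          ((stabilizer G a ⊓ stabilizer G b : Subgroup G) : Set G)) := by
      rintro y ⟨δ, ha, hb, rfl⟩
      obtain ⟨s, hs, rfl⟩ := transporter_subset h1 h2 ⟨ha, hb⟩
      refine ⟨s • x, ⟨s, hs, rfl⟩, ?_⟩
      show δ₀ • s • x = (δ₀ * s) • x
      rw [mul_smul]
    exact (((finite_smulImg hE (hdW x))).image _).subset this
  · convert Set.finite_empty
    ext y
    simp only [Set.mem_setOf_eq, Set.mem_empty_iff_false, iff_false]
    rintro ⟨δ, h1, h2, _⟩
    exact hne ⟨δ, h1, h2⟩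

/-- pinned images, `y = δ⁻¹ • x` version -/
lemma pin_invsmul_finite {V : Type v} {W : Type w} [MulAction G V] [MulAction G W]
    (hdW : ∀ z : W, IsOpen ((stabilizer G z : Subgroup G) : Set G))
    {a b : V} (hE : IsCompact ((stabilizer G a ⊓ stabilizer G b : Subgroup G) : Set G))
    (c d : V) (x : W) :
    {y : W | ∃ δ : G, δ • a = c ∧ δ • b = d ∧ y = δ⁻¹ • x}.Finite := by
  by_cases hne : ∃ δ₀ : G, δ₀ • a = c ∧ δ₀ • b = d
  · obtain ⟨δ₀, h1, h2⟩ := hne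
    have : {y : W | ∃ δ : G, δ • a = c ∧ δ • b = d ∧ y = δ⁻¹ • x} ⊆
        ((fun s => s • (δ₀⁻¹ • x)) ''
          ((stabilizer G a ⊓ stabilizer G b : Subgroup G) : Set G)) := by
      rintro y ⟨δ, ha, hb, rfl⟩
      obtain ⟨s, hs, rfl⟩ := transporter_subset h1 h2 ⟨ha, hb⟩
      refine ⟨s⁻¹, ?_, ?_⟩
      · exact Subgroup.inv_mem _ hs
      · show s⁻¹ • δ₀⁻¹ • x = (δ₀ * s)⁻¹ • x
        rw [← mul_smul, mul_inv_rev]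
    exact ((finite_smulImg hE (hdW _))).subset this
  · convert Set.finite_empty
    ext y
    simp only [Set.mem_setOf_eq, Set.mem_empty_iff_false, iff_false]
    rintro ⟨δ, h1, h2, _⟩
    exact hne ⟨δ, h1, h2⟩

end Basics2

section GraphAct
variable {G : Type u} [Group G] [TopologicalSpace G] [IsTopologicalGroup G]
variable {V : Type v} [MulAction G V] {Γ : SimpleGraph V}

/-- A graph action gives graph homomorphisms. -/
def gHom (hga : IsGraphAction G Γ) (g : G) : Γ →g Γ :=
  ⟨fun z => g • z, fun h => hga g _ _ h⟩

lemma gHom_apply (hga : IsGraphAction G Γ) (g : G) (z : V) : gHom hga g z = g • z := rfl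

lemma smul_dist (hga : IsGraphAction G Γ) (hconn : Γ.Connected) (g : G) (a b : V) :
    Γ.dist (g • a) (g • b) = Γ.dist a b := by
  have key : ∀ (g : G) (a b : V), Γ.dist (g • a) (g • b) ≤ Γ.dist a b := by
    intro g a b
    obtain ⟨p, hp⟩ := (hconn.preconnected a b).exists_walk_length_eq_dist
    calc Γ.dist (g • a) (g • b) ≤ (p.map (gHom hga g)).length := SimpleGraph.dist_le _
    _ = Γ.dist a b := by rw [SimpleGraph.Walk.length_map, hp]
  refine le_antisymm (key g a b) ?_
  have := key g⁻¹ (g • a) (g • b)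
  simpa using this

lemma dist_le_of_edge_bound {V' : Type w} {Γ' : SimpleGraph V'} (hconn' : Γ'.Connected)
    (f : V → V') (Λ : ℕ) (hedge : ∀ a b : V, Γ.Adj a b → Γ'.dist (f a) (f b) ≤ Λ) :
    ∀ {a b : V} (p : Γ.Walk a b), Γ'.dist (f a) (f b) ≤ Λ * p.length := by
  intro a b p
  induction p with
  | nil => simp [SimpleGraph.dist_self]
  | @cons a c b h q ih =>
    calc Γ'.dist (f a) (f b) ≤ Γ'.dist (f a) (f c) + Γ'.dist (f c) (f b) :=
          hconn'.dist_triangle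
    _ ≤ Λ + Λ * q.length := add_le_add (hedge _ _ h) ih
    _ = Λ * (SimpleGraph.Walk.cons h q).length := by
          rw [SimpleGraph.Walk.length_cons]; ring

lemma dist_map_dist (hconn : Γ.Connected) {V' : Type w} {Γ' : SimpleGraph V'}
    (hconn' : Γ'.Connected) (f : V → V') (Λ : ℕ)
    (hedge : ∀ a b : V, Γ.Adj a b → Γ'.dist (f a) (f b) ≤ Λ) (a b : V) :
    Γ'.dist (f a) (f b) ≤ Λ * Γ.dist a b := by
  obtain ⟨p, hp⟩ := (hconn.preconnected a b).exists_walk_length_eq_dist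
  calc Γ'.dist (f a) (f b) ≤ Λ * p.length := dist_le_of_edge_bound hconn' f Λ hedge p
  _ = Λ * Γ.dist a b := by rw [hp]

lemma neighborSet_finite_of_compact_stab
    (hdisc : IsDiscreteAction G Γ)
    {t : Set (V × V)} (htfin : t.Finite)
    (hcoc : ∀ a b : V, Γ.Adj a b → ∃ g : G, (g • a, g • b) ∈ t)
    {v : V} (hv : IsCompact ((stabilizer G v : Subgroup G) : Set G)) :
    (Γ.neighborSet v).Finite := by
  have hsub : Γ.neighborSet v ⊆
      ⋃ p ∈ t, {y : V | ∃ δ : G, δ • v = p.1 ∧ δ • v = p.1 ∧ y = δ⁻¹ • p.2} := by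
    intro y hy
    obtain ⟨g, hg⟩ := hcoc v y hy
    refine Set.mem_biUnion hg ⟨g, rfl, rfl, ?_⟩
    simp
  refine (Set.Finite.biUnion htfin fun p _ => ?_).subset hsub
  have hE : IsCompact ((stabilizer G v ⊓ stabilizer G v : Subgroup G) : Set G) := by
    rw [inf_idem]; exact hv
  exact pin_invsmul_finite (fun z => hdisc z) hE p.1 p.1 p.2

lemma exists_nat_bound_of_finite {α : Type*} {s : Set α} (hs : s.Finite) (f : α → ℕ) :
    ∃ B : ℕ, ∀ x ∈ s, f x ≤ B := by
  obtain ⟨B, hB⟩ := (hs.image f).bddAbove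
  exact ⟨B, fun x hx => hB (Set.mem_image_of_mem f hx)⟩

end GraphAct

lemma Set.Nonempty.some_congr {α : Type*} {s t : Set α} (h : s = t) (hs : s.Nonempty)
    (ht : t.Nonempty) : hs.some = ht.some := by subst h; rfl

section PackSec
variable {G : Type u} [Group G] [TopologicalSpace G] [IsTopologicalGroup G]
variable {V : Type v} [MulAction G V]

structure Pack (G : Type u) [Group G] [TopologicalSpace G] (V : Type v) [MulAction G V]
    (Γ : SimpleGraph V) : Type (max u v) where
  S : Set V
  T : Set (V × V)
  hS : S.Finite
  hT : T.Finite
  rep : V → V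
  sig : V → G
  chi : V → V → G
  hrepS : ∀ z, rep z ∈ S
  hsig : ∀ z, sig z • z = rep z
  hrep_smul : ∀ (g : G) (z : V), rep (g • z) = rep z
  hchi1 : ∀ a b, Γ.Adj a b → chi a b • a = rep a
  hchi2 : ∀ a b, Γ.Adj a b → (rep a, chi a b • b) ∈ T

lemma exists_pack {Γ : SimpleGraph V} (hcoc : IsCocompactAction G Γ) :
    Nonempty (Pack G V Γ) := by
  classical
  obtain ⟨⟨s, hsfin, hs⟩, ⟨t, htfin, ht⟩⟩ := hcoc
  have hOS : ∀ z : V, ({u ∈ s | ∃ g : G, g • z = u}).Nonempty := fun z => by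
    obtain ⟨g, hg⟩ := hs z; exact ⟨g • z, hg, g, rfl⟩
  have hOSsmul : ∀ (g : G) (z : V),
      {u ∈ s | ∃ h : G, h • (g • z) = u} = {u ∈ s | ∃ h : G, h • z = u} := by
    intro g z; ext u
    constructor
    · rintro ⟨hu, h, rfl⟩; exact ⟨hu, h * g, by rw [mul_smul]⟩
    · rintro ⟨hu, h, rfl⟩; exact ⟨hu, h * g⁻¹, by rw [mul_smul, inv_smul_smul]⟩
  set rep : V → V := fun z => (hOS z).some with hrepdef
  have hrepmem : ∀ z, rep z ∈ {u ∈ s | ∃ g : G, g • z = u} := fun z => (hOS z).some_mem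
  have hrep_smul : ∀ (g : G) (z : V), rep (g • z) = rep z := fun g z =>
    Set.Nonempty.some_congr (hOSsmul g z) _ _
  have hsig : ∀ z : V, ∃ g : G, g • z = rep z := fun z => (hrepmem z).2
  set sig : V → G := fun z => (hsig z).choose with hsigdef
  have hsig' : ∀ z : V, sig z • z = rep z := fun z => (hsig z).choose_spec
  set chi : V → V → G := fun a b =>
    if h : Γ.Adj a b then sig ((ht a b h).choose • a) * (ht a b h).choose else 1 with hchidef
  refine ⟨⟨s, (fun p => (rep p.1, sig p.1 • p.2)) '' t, hsfin, htfin.image _,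
    rep, sig, chi, fun z => (hrepmem z).1, hsig', hrep_smul, ?_, ?_⟩⟩
  · intro a b h
    have hg := (ht a b h).choose_spec
    set g := (ht a b h).choose
    have : chi a b = sig (g • a) * g := by simp only [hchidef]; rw [dif_pos h]
    rw [this, mul_smul, hsig', hrep_smul]
  · intro a b h
    have hg := (ht a b h).choose_spec
    set g := (ht a b h).choose
    have hc : chi a b = sig (g • a) * g := by simp only [hchidef]; rw [dif_pos h]
    refine ⟨(g • a, g • b), hg, ?_⟩
    simp only [hc, mul_smul]
    rw [hrep_smul]

end PackSec

section CrossSec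
variable {G : Type u} [Group G] [TopologicalSpace G] [IsTopologicalGroup G]
variable {V : Type v} {V' : Type w} [MulAction G V] [MulAction G V']
variable {Γ : SimpleGraph V} {Γ' : SimpleGraph V'}

lemma exists_tau (ℋ : Finset (Subgroup G))
    (hc6 : ∀ z : V, IsCompact ((stabilizer G z : Subgroup G) : Set G) ∨
      ∃ H ∈ ℋ, ∃ g : G, stabilizer G z = conjSubgroup g H)
    (hc7 : ∀ H ∈ ℋ, ∃ w : V', stabilizer G w = H)
    (hne : Nonempty V') :
    ∃ tau : V → V', ∀ u : V, ¬ IsCompact ((stabilizer G u : Subgroup G) : Set G) →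
      stabilizer G (tau u) = stabilizer G u := by
  have key : ∀ u : V, ∃ w : V',
      (¬ IsCompact ((stabilizer G u : Subgroup G) : Set G) →
        stabilizer G w = stabilizer G u) := by
    intro u
    by_cases hu : IsCompact ((stabilizer G u : Subgroup G) : Set G)
    · exact ⟨hne.some, fun h => absurd hu h⟩
    · rcases hc6 u with h | ⟨H, hH, g, hg⟩
      · exact absurd h hu
      · obtain ⟨w, hw⟩ := hc7 H hH
        refine ⟨g • w, fun _ => ?_⟩
        rw [stabilizer_smul_eq_stabilizer_map_conj, hw, hg]
        rfl
  choose tau htau using key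
  exact ⟨tau, htau⟩

/-- The blob of a vertex: the (finite) orbit of `tau u` under the stabilizer of `u`. -/
def Blob (G : Type u) [Group G] [MulAction G V] [MulAction G V'] (tau : V → V') (u : V) :
    Set V' :=
  (fun g => g • tau u) '' ((stabilizer G u : Subgroup G) : Set G)

lemma tau_mem_blob (tau : V → V') (u : V) : tau u ∈ Blob G tau u :=
  ⟨1, Subgroup.one_mem _, one_smul _ _⟩

lemma blob_finite (tau : V → V')
    (htau : ∀ u : V, ¬ IsCompact ((stabilizer G u : Subgroup G) : Set G) →
      stabilizer G (tau u) = stabilizer G u)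
    (hdisc' : ∀ w : V', IsOpen ((stabilizer G w : Subgroup G) : Set G)) (u : V) :
    (Blob G tau u).Finite := by
  by_cases hu : IsCompact ((stabilizer G u : Subgroup G) : Set G)
  · exact finite_smulImg hu (hdisc' (tau u))
  · have : Blob G tau u ⊆ {tau u} := by
      rintro _ ⟨g, hg, rfl⟩
      have : g ∈ stabilizer G (tau u) := by rw [htau u hu]; exact hg
      simp [mem_stabilizer_iff.mp this]
    exact (Set.finite_singleton _).subset this

/-- The comparison map between the two graphs. -/
def Amap (P : Pack G V Γ) (tau : V → V') (z : V) : V' := (P.sig z)⁻¹ • tau (P.rep z)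

lemma sig_inv_rep (P : Pack G V Γ) (z : V) : (P.sig z)⁻¹ • P.rep z = z := by
  rw [← P.hsig z, inv_smul_smul]

lemma K1 (P : Pack G V Γ) {z z' : V} (h : Γ.Adj z z') :
    (P.chi z z' * (P.sig z)⁻¹) ∈ stabilizer G (P.rep z) := by
  rw [mem_stabilizer_iff, mul_smul, sig_inv_rep, P.hchi1 z z' h]

lemma chi_Amap_mem_blob (P : Pack G V Γ) (tau : V → V') {z z' : V} (h : Γ.Adj z z') :
    P.chi z z' • Amap P tau z ∈ Blob G tau (P.rep z) := by
  refine ⟨P.chi z z' * (P.sig z)⁻¹, K1 P h, ?_⟩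
  show (P.chi z z' * (P.sig z)⁻¹) • tau (P.rep z) = _
  rw [Amap, mul_smul]

lemma K2 (P : Pack G V Γ) {z z' : V} (h : Γ.Adj z z') :
    (P.sig (P.chi z z' • z') * P.chi z z' * (P.sig z')⁻¹) ∈ stabilizer G (P.rep z') := by
  rw [mem_stabilizer_iff, mul_smul, mul_smul, sig_inv_rep]
  have h1 : P.rep (P.chi z z' • z') = P.rep z' := P.hrep_smul _ _
  rw [← h1, P.hsig (P.chi z z' • z')]

lemma K2_blob (P : Pack G V Γ) (tau : V → V') {z z' : V} (h : Γ.Adj z z') :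
    P.sig (P.chi z z' • z') • (P.chi z z' • Amap P tau z') ∈ Blob G tau (P.rep (P.chi z z' • z')) := by
  have h1 : P.rep (P.chi z z' • z') = P.rep z' := P.hrep_smul _ _
  rw [h1]
  refine ⟨P.sig (P.chi z z' • z') * P.chi z z' * (P.sig z')⁻¹, K2 P h, ?_⟩
  show (P.sig (P.chi z z' • z') * P.chi z z' * (P.sig z')⁻¹) • tau (P.rep z') = _
  simp only [Amap, mul_smul]

/-- Endpoint pairs for the chosen template walks. -/
def EndPairs (P : Pack G V Γ) (tau : V → V') : Set (V' × V') :=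
  {pr | ∃ p ∈ P.T, pr.1 ∈ Blob G tau p.1 ∧ ∃ c ∈ Blob G tau (P.rep p.2), pr.2 = (P.sig p.2)⁻¹ • c}

lemma endPairs_finite (P : Pack G V Γ) (tau : V → V')
    (htau : ∀ u : V, ¬ IsCompact ((stabilizer G u : Subgroup G) : Set G) →
      stabilizer G (tau u) = stabilizer G u)
    (hdisc' : ∀ w : V', IsOpen ((stabilizer G w : Subgroup G) : Set G)) :
    (EndPairs P tau).Finite := by
  have : EndPairs P tau ⊆ ⋃ p ∈ P.T,
      (Blob G tau p.1) ×ˢ ((fun c => (P.sig p.2)⁻¹ • c) '' Blob G tau (P.rep p.2)) := by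
    rintro ⟨x, y⟩ ⟨p, hp, h1, c, hc, rfl⟩
    exact Set.mem_biUnion hp ⟨h1, ⟨c, hc, rfl⟩⟩
  refine (Set.Finite.biUnion P.hT fun p _ => ?_).subset this
  exact ((blob_finite tau htau hdisc' p.1).prod ((blob_finite tau htau hdisc' _).image _))

lemma edge_endPair (P : Pack G V Γ) (tau : V → V') {z z' : V} (h : Γ.Adj z z') :
    (P.chi z z' • Amap P tau z, P.chi z z' • Amap P tau z') ∈ EndPairs P tau := by
  refine ⟨(P.rep z, P.chi z z' • z'), P.hchi2 z z' h, chi_Amap_mem_blob P tau h,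
    P.sig (P.chi z z' • z') • (P.chi z z' • Amap P tau z'), K2_blob P tau h, ?_⟩
  simp

/-- Template walks. -/
noncomputable def tw (hconn' : Γ'.Connected) (b c : V') : Γ'.Walk b c :=
  (hconn'.preconnected b c).some

lemma exists_lam (P : Pack G V Γ) (tau : V → V') (hconn' : Γ'.Connected)
    (htau : ∀ u : V, ¬ IsCompact ((stabilizer G u : Subgroup G) : Set G) →
      stabilizer G (tau u) = stabilizer G u)
    (hdisc' : ∀ w : V', IsOpen ((stabilizer G w : Subgroup G) : Set G)) :
    ∃ Λ : ℕ, ∀ pr ∈ EndPairs P tau, (tw hconn' pr.1 pr.2).length ≤ Λ :=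
  exists_nat_bound_of_finite (endPairs_finite P tau htau hdisc') _

lemma dist_Amap_le (P : Pack G V Γ) (tau : V → V') (hconn' : Γ'.Connected)
    (hga' : IsGraphAction G Γ') {Λ : ℕ}
    (hΛ : ∀ pr ∈ EndPairs P tau, (tw hconn' pr.1 pr.2).length ≤ Λ)
    {z z' : V} (h : Γ.Adj z z') :
    Γ'.dist (Amap P tau z) (Amap P tau z') ≤ Λ := by
  have hd := smul_dist hga' hconn' (P.chi z z') (Amap P tau z) (Amap P tau z')
  rw [← hd]
  calc Γ'.dist (P.chi z z' • Amap P tau z) (P.chi z z' • Amap P tau z')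
      ≤ (tw hconn' (P.chi z z' • Amap P tau z) (P.chi z z' • Amap P tau z')).length :=
        SimpleGraph.dist_le _
  _ ≤ Λ := hΛ _ (edge_endPair P tau h)

end CrossSec

section CompSec
variable {G : Type u} [Group G] [TopologicalSpace G] [IsTopologicalGroup G]
variable {V : Type v} {V' : Type w} [MulAction G V] [MulAction G V']
variable {Γ : SimpleGraph V} {Γ' : SimpleGraph V'}

lemma comp_bound (P : Pack G V Γ) (P' : Pack G V' Γ') (tau : V → V') (tau' : V' → V)
    (htau : ∀ u : V, ¬ IsCompact ((stabilizer G u : Subgroup G) : Set G) →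
      stabilizer G (tau u) = stabilizer G u)
    (htau' : ∀ u : V', ¬ IsCompact ((stabilizer G u : Subgroup G) : Set G) →
      stabilizer G (tau' u) = stabilizer G u)
    (hdisc : ∀ z : V, IsOpen ((stabilizer G z : Subgroup G) : Set G))
    (hga : IsGraphAction G Γ) (hconn : Γ.Connected) :
    ∃ D : ℕ, ∀ z : V, Γ.dist z (Amap P' tau' (Amap P tau z)) ≤ D := by
  classical
  -- the finite set of possible (base, image) pairs
  set YD2 : Set (V × V) :=
    {p | p.1 ∈ P.S ∧ ∃ u₂ ∈ P'.S, ∃ m : G, m • tau p.1 = u₂ ∧ p.2 = m⁻¹ • tau' u₂}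
    with hYD2
  have hfin : YD2.Finite := by
    have hsub : YD2 ⊆ ⋃ u ∈ P.S, ⋃ u₂ ∈ P'.S,
        (fun y => (u, y)) '' {y : V | ∃ m : G, m • tau u = u₂ ∧ m • tau u = u₂ ∧ y = m⁻¹ • tau' u₂} := by
      rintro ⟨u, y⟩ ⟨hu, u₂, hu₂, m, hm, rfl⟩
      exact Set.mem_biUnion hu (Set.mem_biUnion hu₂ ⟨m⁻¹ • tau' u₂, ⟨m, hm, hm, rfl⟩, rfl⟩)
    refine (Set.Finite.biUnion P.hS fun u _ => Set.Finite.biUnion P'.hS fun u₂ _ => ?_).subset hsub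
    refine Set.Finite.image _ ?_
    by_cases hcu : IsCompact ((stabilizer G (tau u) : Subgroup G) : Set G)
    · have hE : IsCompact ((stabilizer G (tau u) ⊓ stabilizer G (tau u) : Subgroup G) : Set G) := by
        rw [inf_idem]; exact hcu
      exact pin_invsmul_finite (fun z => hdisc z) hE u₂ u₂ (tau' u₂)
    · by_cases hne : ∃ m₀ : G, m₀ • tau u = u₂
      · obtain ⟨m₀, hm₀⟩ := hne
        have hsing : {y : V | ∃ m : G, m • tau u = u₂ ∧ m • tau u = u₂ ∧ y = m⁻¹ • tau' u₂} ⊆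
            {m₀⁻¹ • tau' u₂} := by
          rintro y ⟨m, hm, -, rfl⟩
          -- m = m₀ * s with s in stabilizer of tau u
          have hs : (m₀⁻¹ * m) • tau u = tau u := by
            rw [mul_smul, hm, ← hm₀, inv_smul_smul]
          -- stabilizer of u₂ is noncompact, so tau' has exact stabilizer
          have hnc2 : ¬ IsCompact ((stabilizer G u₂ : Subgroup G) : Set G) := by
            rw [← hm₀]
            rw [isCompact_stab_smul_iff]
            exact hcu
          have hst : stabilizer G (tau' u₂) = stabilizer G u₂ := htau' u₂ hnc2
          have hfix : (m * m₀⁻¹) • tau' u₂ = tau' u₂ := by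
            have hmem : (m * m₀⁻¹) ∈ stabilizer G (tau' u₂) := by
              rw [hst, mem_stabilizer_iff, ← hm₀, ← mul_smul,
                show m * m₀⁻¹ * m₀ = m by group, hm, ← hm₀]
            exact mem_stabilizer_iff.mp hmem
          have heq : m⁻¹ • tau' u₂ = m₀⁻¹ • tau' u₂ := by
            conv_lhs => rw [← hfix]
            rw [← mul_smul]
            congr 1
            group
          simp [heq]
        exact (Set.finite_singleton _).subset hsing
      · refine Set.Finite.subset (Set.finite_empty) ?_
        rintro y ⟨m, hm, -, rfl⟩
        exact absurd ⟨m, hm⟩ hne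
  obtain ⟨D, hD⟩ := exists_nat_bound_of_finite hfin (fun p => Γ.dist p.1 p.2)
  refine ⟨D, fun z => ?_⟩
  set w := Amap P tau z with hw
  set m := P'.sig w * (P.sig z)⁻¹ with hm
  have hmtau : m • tau (P.rep z) = P'.rep w := by
    rw [hm, mul_smul]
    have : (P.sig z)⁻¹ • tau (P.rep z) = w := rfl
    rw [this, P'.hsig w]
  have key : Amap P' tau' w = (P.sig z)⁻¹ • (m⁻¹ • tau' (P'.rep w)) := by
    rw [Amap, ← mul_smul]
    congr 1
    rw [hm]
    group
  have hz : z = (P.sig z)⁻¹ • P.rep z := (sig_inv_rep P z).symm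
  calc Γ.dist z (Amap P' tau' w)
      = Γ.dist ((P.sig z)⁻¹ • P.rep z) ((P.sig z)⁻¹ • (m⁻¹ • tau' (P'.rep w))) := by
        rw [← hz, ← key]
  _ = Γ.dist (P.rep z) (m⁻¹ • tau' (P'.rep w)) := smul_dist hga hconn _ _ _
  _ ≤ D := by
      refine hD (P.rep z, m⁻¹ • tau' (P'.rep w)) ?_
      exact ⟨P.hrepS z, P'.rep w, P'.hrepS w, m, hmtau, rfl⟩

end CompSec

section QIHalf
variable {G : Type u} [Group G] [TopologicalSpace G] [IsTopologicalGroup G]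
variable {V : Type v} {V' : Type w} [MulAction G V] [MulAction G V']

lemma qi_of_ca (ℋ : Finset (Subgroup G)) {Γ : SimpleGraph V} {Γ' : SimpleGraph V'}
    (h₁ : IsCayleyAbelsGraph G ℋ Γ) (h₂ : IsCayleyAbelsGraph G ℋ Γ') :
    QuasiIsometricGraphs Γ Γ' := by
  classical
  obtain ⟨hga, hconn, hdisc, hcoc, hedge, hc6, hc7, hc8⟩ := h₁
  obtain ⟨hga', hconn', hdisc', hcoc', hedge', hc6', hc7', hc8'⟩ := h₂
  obtain ⟨P⟩ := exists_pack hcoc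
  obtain ⟨P'⟩ := exists_pack hcoc'
  obtain ⟨tau, htau⟩ := exists_tau (V := V) (V' := V') ℋ hc6 hc7' hconn'.nonempty
  obtain ⟨tau', htau'⟩ := exists_tau (V := V') (V' := V) ℋ hc6' hc7 hconn.nonempty
  obtain ⟨Λ, hΛ⟩ := exists_lam P tau hconn' htau (fun w => hdisc' w)
  obtain ⟨Λ', hΛ'⟩ := exists_lam P' tau' hconn htau' (fun w => hdisc w)
  obtain ⟨D, hD⟩ := comp_bound P P' tau tau' htau htau' (fun z => hdisc z) hga hconn
  obtain ⟨D', hD'⟩ := comp_bound P' P tau' tau htau' htau (fun z => hdisc' z) hga' hconn'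
  set f : V → V' := Amap P tau with hf
  set F : V' → V := Amap P' tau' with hF
  have hup : ∀ x y : V, Γ'.dist (f x) (f y) ≤ Λ * Γ.dist x y :=
    dist_map_dist hconn hconn' f Λ (fun a b h => dist_Amap_le P tau hconn' hga' hΛ h)
  have hup' : ∀ x y : V', Γ.dist (F x) (F y) ≤ Λ' * Γ'.dist x y :=
    dist_map_dist hconn' hconn F Λ' (fun a b h => dist_Amap_le P' tau' hconn hga hΛ' h)
  have hlow : ∀ x y : V, Γ.dist x y ≤ Λ' * Γ'.dist (f x) (f y) + 2 * D := by
    intro x y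
    calc Γ.dist x y ≤ Γ.dist x (F (f x)) + Γ.dist (F (f x)) y := hconn.dist_triangle
    _ ≤ D + (Γ.dist (F (f x)) (F (f y)) + Γ.dist (F (f y)) y) :=
        add_le_add (hD x) hconn.dist_triangle
    _ ≤ D + (Λ' * Γ'.dist (f x) (f y) + D) := by
        have h2 : Γ.dist (F (f y)) y ≤ D := by rw [SimpleGraph.dist_comm]; exact hD y
        exact add_le_add (le_refl D) (add_le_add (hup' _ _) h2)
    _ = Λ' * Γ'.dist (f x) (f y) + 2 * D := by ring
  refine ⟨f, max (max (Λ : ℝ) (Λ' : ℝ)) 1, 2 * D + D', le_max_right _ _, by positivity, ?_, ?_⟩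
  · intro x y
    set L : ℝ := max (max (Λ : ℝ) (Λ' : ℝ)) 1 with hL
    have hL1 : (1 : ℝ) ≤ L := le_max_right _ _
    have hLpos : (0 : ℝ) < L := lt_of_lt_of_le one_pos hL1
    have hLΛ : (Λ : ℝ) ≤ L := le_trans (le_max_left _ _) (le_max_left _ _)
    have hLΛ' : (Λ' : ℝ) ≤ L := le_trans (le_max_right _ _) (le_max_left _ _)
    have hdnn : (0 : ℝ) ≤ (Γ'.dist (f x) (f y) : ℝ) := Nat.cast_nonneg _
    have hdnn1 : (0 : ℝ) ≤ (Γ.dist x y : ℝ) := Nat.cast_nonneg _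
    constructor
    · have hlowR : (Γ.dist x y : ℝ) ≤ Λ' * Γ'.dist (f x) (f y) + 2 * D := by
        have := hlow x y
        push_cast
        exact_mod_cast this
      rw [sub_le_iff_le_add]
      rw [inv_mul_le_iff₀ hLpos]
      calc (Γ.dist x y : ℝ) ≤ Λ' * Γ'.dist (f x) (f y) + 2 * D := hlowR
      _ ≤ L * (Γ'.dist (f x) (f y) + (2 * D + D')) := by nlinarith [Nat.cast_nonneg (α := ℝ) D, Nat.cast_nonneg (α := ℝ) D']
    · have hupR : (Γ'.dist (f x) (f y) : ℝ) ≤ Λ * Γ.dist x y := by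
        have := hup x y
        exact_mod_cast this
      calc (Γ'.dist (f x) (f y) : ℝ) ≤ Λ * Γ.dist x y := hupR
      _ ≤ L * Γ.dist x y + (2 * D + D') := by nlinarith [Nat.cast_nonneg (α := ℝ) D, Nat.cast_nonneg (α := ℝ) D']
  · intro z
    refine ⟨F z, ?_⟩
    have := hD' z
    have hcast : (Γ'.dist z (f (F z)) : ℝ) ≤ D' := by exact_mod_cast this
    linarith [Nat.cast_nonneg (α := ℝ) D]

end QIHalf

section FineSec
variable {G : Type u} [Group G] [TopologicalSpace G] [IsTopologicalGroup G]
variable {V : Type v} {V' : Type w} [MulAction G V] [MulAction G V']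

/-- All data needed for the fineness transfer argument. `Γ` is the graph whose fineness
at `v` we establish; `Γ'` is the fine graph. -/
structure FS (G : Type u) [Group G] [TopologicalSpace G] (V : Type v) (V' : Type w)
    [MulAction G V] [MulAction G V'] : Type (max u v w) where
  Γ : SimpleGraph V
  Γ' : SimpleGraph V'
  P : Pack G V Γ
  tau : V → V'
  v : V
  x : V
  n : ℕ
  lam : ℕ
  hga : IsGraphAction G Γ
  hga' : IsGraphAction G Γ'
  hdisc : IsDiscreteAction G Γ
  hdisc' : IsDiscreteAction G Γ'
  hedge' : HasCompactEdgeStabilizers G Γ'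
  hconn' : Γ'.Connected
  htau : ∀ u : V, ¬ IsCompact ((stabilizer G u : Subgroup G) : Set G) →
    stabilizer G (tau u) = stabilizer G u
  hvx : Γ.Adj v x
  hexcl : ∀ z : V, Amap P tau z = Amap P tau v →
    ¬ IsCompact ((stabilizer G z : Subgroup G) : Set G) → z = v
  hfineat : Γ'.FineAt (Amap P tau v)
  hlam : ∀ pr ∈ EndPairs P tau, (tw hconn' pr.1 pr.2).length ≤ lam

namespace FS
variable (fs : FS G V V')

noncomputable def vstar : V' := Amap fs.P fs.tau fs.v

def Amp (z : V) : V' := Amap fs.P fs.tau z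

lemma vstar_eq : fs.vstar = fs.Amp fs.v := rfl

/-- vertices of all template walks -/
def TmplVerts : Set V' :=
  {w : V' | ∃ pr ∈ EndPairs fs.P fs.tau, w ∈ (tw fs.hconn' pr.1 pr.2).support}

/-- consecutive pairs in template walks -/
def Consec : Set (V' × V') :=
  {tt : V' × V' | ∃ pr ∈ EndPairs fs.P fs.tau,
    ∃ d ∈ (tw fs.hconn' pr.1 pr.2).darts, d.fst = tt.1 ∧ d.snd = tt.2}

lemma tmplVerts_finite : fs.TmplVerts.Finite := by
  have : fs.TmplVerts ⊆ ⋃ pr ∈ EndPairs fs.P fs.tau,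
      {w : V' | w ∈ (tw fs.hconn' pr.1 pr.2).support} := by
    rintro w ⟨pr, hpr, hw⟩
    exact Set.mem_biUnion hpr hw
  exact ((endPairs_finite fs.P fs.tau fs.htau (fun w => fs.hdisc' w)).biUnion
    (fun pr _ => (tw fs.hconn' pr.1 pr.2).support.finite_toSet)).subset this

lemma consec_finite : fs.Consec.Finite := by
  have : fs.Consec ⊆ ⋃ pr ∈ EndPairs fs.P fs.tau,
      (fun d : fs.Γ'.Dart => (d.fst, d.snd)) '' {d | d ∈ (tw fs.hconn' pr.1 pr.2).darts} := by
    rintro tt ⟨pr, hpr, d, hd, h1, h2⟩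
    exact Set.mem_biUnion hpr ⟨d, hd, by simp [h1, h2]⟩
  exact ((endPairs_finite fs.P fs.tau fs.htau (fun w => fs.hdisc' w)).biUnion
    (fun pr _ => ((tw fs.hconn' pr.1 pr.2).darts.finite_toSet).image _)).subset this

lemma consec_adj {tt : V' × V'} (h : tt ∈ fs.Consec) : fs.Γ'.Adj tt.1 tt.2 := by
  obtain ⟨pr, _, d, _, h1, h2⟩ := h
  rw [← h1, ← h2]
  exact d.adj

/-- The compact generating pieces. -/
def FF : Set G :=
  {g : G | ∃ u ∈ fs.P.S, IsCompact ((stabilizer G u : Subgroup G) : Set G) ∧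
    g ∈ stabilizer G u} ∪
  {g : G | ∃ p ∈ fs.P.T, g = fs.P.sig p.2 ∨ g = (fs.P.sig p.2)⁻¹} ∪ {1}

lemma FF_compact : IsCompact fs.FF := by
  refine IsCompact.union (IsCompact.union ?_ ?_) isCompact_singleton
  · have : {g : G | ∃ u ∈ fs.P.S, IsCompact ((stabilizer G u : Subgroup G) : Set G) ∧
        g ∈ stabilizer G u} = ⋃ u ∈ {u ∈ fs.P.S | IsCompact ((stabilizer G u : Subgroup G) : Set G)},
        ((stabilizer G u : Subgroup G) : Set G) := by
      ext g
      simp only [Set.mem_setOf_eq, Set.mem_iUnion, Set.mem_sep_iff, SetLike.mem_coe]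
      tauto
    rw [this]
    apply Set.Finite.isCompact_biUnion (fs.P.hS.subset (Set.sep_subset _ _))
    rintro u ⟨-, hu⟩
    exact hu
  · have : {g : G | ∃ p ∈ fs.P.T, g = fs.P.sig p.2 ∨ g = (fs.P.sig p.2)⁻¹}.Finite := by
      have : {g : G | ∃ p ∈ fs.P.T, g = fs.P.sig p.2 ∨ g = (fs.P.sig p.2)⁻¹} ⊆
          (fun p : V × V => fs.P.sig p.2) '' fs.P.T ∪
            (fun p : V × V => (fs.P.sig p.2)⁻¹) '' fs.P.T := by
        rintro g ⟨p, hp, h | h⟩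
        · exact Or.inl ⟨p, hp, h.symm⟩
        · exact Or.inr ⟨p, hp, h.symm⟩
      exact ((fs.P.hT.image _).union (fs.P.hT.image _)).subset this
    exact this.isCompact
  
lemma FF_one : (1 : G) ∈ fs.FF := Or.inr rfl

lemma FF_inv {g : G} (h : g ∈ fs.FF) : g⁻¹ ∈ fs.FF := by
  rcases h with (⟨u, hu, hc, hg⟩ | ⟨p, hp, hor⟩) | h1
  · exact Or.inl (Or.inl ⟨u, hu, hc, Subgroup.inv_mem _ hg⟩)
  · rcases hor with h | h
    · exact Or.inl (Or.inr ⟨p, hp, Or.inr (by rw [h])⟩)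
    · exact Or.inl (Or.inr ⟨p, hp, Or.inl (by rw [h, inv_inv])⟩)
  · rw [Set.mem_singleton_iff] at h1
    rw [h1]
    exact Or.inr (by simp)

/-- Products of at most `j` factors from `FF`, on either side. -/
def MM : ℕ → Set G
  | 0 => {1}
  | (j+1) => MM j ∪ fs.FF * MM j ∪ MM j * fs.FF

lemma MM_one : ∀ j, (1 : G) ∈ fs.MM j := by
  intro j
  induction j with
  | zero => exact rfl
  | succ j ih => exact Or.inl (Or.inl ih)

lemma MM_mono : ∀ j, fs.MM j ⊆ fs.MM (j+1) := fun j => fun g hg => Or.inl (Or.inl hg)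

lemma MM_mono_le {j k : ℕ} (h : j ≤ k) : fs.MM j ⊆ fs.MM k := by
  induction k with
  | zero => rw [Nat.le_zero.mp h]
  | succ k ih =>
    rcases Nat.lt_or_ge j (k+1) with hlt | hge
    · exact (ih (Nat.lt_succ_iff.mp hlt)).trans (fs.MM_mono k)
    · have : j = k + 1 := le_antisymm h hge
      rw [this]

lemma MM_compact : ∀ j, IsCompact (fs.MM j) := by
  intro j
  induction j with
  | zero => exact isCompact_singleton
  | succ j ih => exact (ih.union (fs.FF_compact.mul ih)).union (ih.mul fs.FF_compact)

lemma MM_inv : ∀ j, ∀ g ∈ fs.MM j, g⁻¹ ∈ fs.MM j := by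
  intro j
  induction j with
  | zero =>
    intro g hg
    have : g = 1 := hg
    rw [this]
    show (1 : G)⁻¹ ∈ ({1} : Set G)
    simp
  | succ j ih =>
    rintro g ((hg | ⟨a, ha, b, hb, rfl⟩) | ⟨a, ha, b, hb, rfl⟩)
    · exact Or.inl (Or.inl (ih g hg))
    · rw [mul_inv_rev]
      exact Or.inr ⟨b⁻¹, ih b hb, a⁻¹, fs.FF_inv ha, rfl⟩
    · rw [mul_inv_rev]
      exact Or.inl (Or.inr ⟨b⁻¹, fs.FF_inv hb, a⁻¹, ih a ha, rfl⟩)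

lemma MM_mul_FF {j : ℕ} {m f : G} (hm : m ∈ fs.MM j) (hf : f ∈ fs.FF) :
    f * m ∈ fs.MM (j+1) ∧ m * f ∈ fs.MM (j+1) :=
  ⟨Or.inl (Or.inr ⟨f, hf, m, hm, rfl⟩), Or.inr ⟨m, hm, f, hf, rfl⟩⟩

end FS
end FineSec

section FineSec2
variable {G : Type u} [Group G] [TopologicalSpace G] [IsTopologicalGroup G]
variable {V : Type v} {V' : Type w} [MulAction G V] [MulAction G V']
namespace FS
variable (fs : FS G V V')

def JMAX : ℕ := 3 * (fs.n + 2)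
def B : ℕ := fs.lam * (fs.n + 2) + 1

/-- the finite set of possible smeared template vertices -/
def YY : Set V' := {y : V' | ∃ w ∈ fs.TmplVerts, ∃ m ∈ fs.MM fs.JMAX, y = m • w}

lemma YY_finite : fs.YY.Finite := by
  have : fs.YY ⊆ ⋃ w ∈ fs.TmplVerts, (fun m => m • w) '' fs.MM fs.JMAX := by
    rintro y ⟨w, hw, m, hm, rfl⟩
    exact Set.mem_biUnion hw ⟨m, hm, rfl⟩
  exact (fs.tmplVerts_finite.biUnion fun w _ =>
    finite_smulImg (fs.MM_compact _) (fs.hdisc' w)).subset this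

lemma tmpl_sub_YY {w : V'} (h : w ∈ fs.TmplVerts) : w ∈ fs.YY :=
  ⟨w, h, 1, fs.MM_one _, (one_smul _ _).symm⟩

lemma smul_mem_YY {w : V'} {m : G} (h : w ∈ fs.TmplVerts) (hm : m ∈ fs.MM fs.JMAX) :
    m • w ∈ fs.YY := ⟨w, h, m, hm, rfl⟩

/-- recovery points in V -/
def RecPts : Set V := {y : V | ∃ u ∈ fs.P.S, ∃ m ∈ fs.MM fs.JMAX, y = m • u}

lemma recPts_finite : fs.RecPts.Finite := by
  have : fs.RecPts ⊆ ⋃ u ∈ fs.P.S, (fun m => m • u) '' fs.MM fs.JMAX := by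
    rintro y ⟨u, hu, m, hm, rfl⟩
    exact Set.mem_biUnion hu ⟨m, hm, rfl⟩
  exact (fs.P.hS.biUnion fun u _ =>
    finite_smulImg (fs.MM_compact _) (fs.hdisc u)).subset this

def ballStep (E : Set V') : Set V' :=
  {y : V' | y ∈ fs.Γ'.neighborSet fs.vstar ∧
    ∃ e ∈ E, ∃ p : (fs.Γ'.deleteVertex fs.vstar).Walk e y, p.length ≤ fs.B}

def pinStep (E : Set V') : Set V' :=
  {y : V' | ∃ e ∈ E, ∃ tt ∈ fs.Consec, ∃ y' ∈ fs.YY,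
    ∃ δ : G, δ • tt.1 = e ∧ δ • tt.2 = fs.vstar ∧ y = δ • y'}

def Op (E : Set V') : Set V' := (E ∪ fs.ballStep E ∪ fs.pinStep E) ∩ fs.Γ'.neighborSet fs.vstar

def AA (k : ℕ) : Set V' :=
  (fs.Op)^[k] ((((fun w => (fs.P.chi fs.v fs.x)⁻¹ • w) '' fs.YY)) ∩ fs.Γ'.neighborSet fs.vstar)

lemma AA_zero : fs.AA 0 =
    (((fun w => (fs.P.chi fs.v fs.x)⁻¹ • w) '' fs.YY)) ∩ fs.Γ'.neighborSet fs.vstar := rfl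

lemma AA_succ (k : ℕ) : fs.AA (k+1) = fs.Op (fs.AA k) := by
  show (fs.Op)^[k+1] _ = fs.Op ((fs.Op)^[k] _)
  rw [Function.iterate_succ_apply']

lemma AA_sub_nbhd (k : ℕ) : fs.AA k ⊆ fs.Γ'.neighborSet fs.vstar := by
  cases k with
  | zero => rw [AA_zero]; exact Set.inter_subset_right
  | succ k => rw [AA_succ]; exact Set.inter_subset_right

lemma ballStep_finite {E : Set V'} (hE : E.Finite) (hEn : E ⊆ fs.Γ'.neighborSet fs.vstar) :
    (fs.ballStep E).Finite := by
  have : fs.ballStep E ⊆ ⋃ e ∈ E,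
      {y : V' | y ∈ fs.Γ'.neighborSet fs.vstar ∧
        ∃ p : (fs.Γ'.deleteVertex fs.vstar).Walk e y, p.length ≤ fs.B} := by
    rintro y ⟨hy, e, he, p, hp⟩
    exact Set.mem_biUnion he ⟨hy, p, hp⟩
  exact (hE.biUnion fun e he => fs.hfineat e (hEn he) fs.B).subset this

lemma pinStep_finite {E : Set V'} (hE : E.Finite) : (fs.pinStep E).Finite := by
  have : fs.pinStep E ⊆ ⋃ e ∈ E, ⋃ tt ∈ fs.Consec, ⋃ y' ∈ fs.YY,
      {y : V' | ∃ δ : G, δ • tt.1 = e ∧ δ • tt.2 = fs.vstar ∧ y = δ • y'} := by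
    rintro y ⟨e, he, tt, htt, y', hy', δ, h1, h2, rfl⟩
    exact Set.mem_biUnion he (Set.mem_biUnion htt (Set.mem_biUnion hy' ⟨δ, h1, h2, rfl⟩))
  refine (hE.biUnion fun e _ => fs.consec_finite.biUnion fun tt htt =>
    fs.YY_finite.biUnion fun y' _ => ?_).subset this
  exact pin_smul_finite (fun z => fs.hdisc' z) (fs.hedge' tt.1 tt.2 (fs.consec_adj htt)) e fs.vstar y'

lemma AA_finite (k : ℕ) : (fs.AA k).Finite := by
  induction k with
  | zero =>
    rw [AA_zero]
    exact ((fs.YY_finite.image _).inter_of_left _)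
  | succ k ih =>
    rw [AA_succ]
    refine Set.Finite.inter_of_left ?_ _
    exact (ih.union (fs.ballStep_finite ih (fs.AA_sub_nbhd k))).union (fs.pinStep_finite ih)

lemma AA_mono {k : ℕ} : fs.AA k ⊆ fs.AA (k+1) := by
  rw [AA_succ]
  intro a ha
  exact ⟨Or.inl (Or.inl ha), fs.AA_sub_nbhd k ha⟩

lemma AA_mono_le {k k' : ℕ} (h : k ≤ k') : fs.AA k ⊆ fs.AA k' := by
  induction k' with
  | zero => rw [Nat.le_zero.mp h]
  | succ k' ih =>
    rcases Nat.lt_or_ge k (k'+1) with hlt | hge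
    · exact (ih (Nat.lt_succ_iff.mp hlt)).trans fs.AA_mono
    · rw [le_antisymm h hge]

/-- reachability certificate -/
def Cert (k L : ℕ) (a : V') : Prop :=
  a ≠ fs.vstar ∧ ∃ e ∈ fs.AA k, ∃ p : (fs.Γ'.deleteVertex fs.vstar).Walk e a, p.length ≤ L

/-- a pinned translate -/
def PinD (k : ℕ) (δp : G) : Prop :=
  ∃ e ∈ fs.AA k, ∃ tt ∈ fs.Consec, δp⁻¹ • tt.1 = e ∧ δp⁻¹ • tt.2 = fs.vstar

/-- a translate pinned up to compact smearing -/
def MPin (k j : ℕ) (δ : G) : Prop :=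
  ∃ δp m : G, (fs.PinD k δp ∨ δp = fs.P.chi fs.v fs.x) ∧ m ∈ fs.MM j ∧ δ = m * δp

lemma Cert_mono {k k' L L' : ℕ} {a : V'} (hk : k ≤ k') (hL : L ≤ L') (h : fs.Cert k L a) :
    fs.Cert k' L' a := by
  obtain ⟨h1, e, he, p, hp⟩ := h
  exact ⟨h1, e, fs.AA_mono_le hk he, p, hp.trans hL⟩

lemma PinD_mono {k k' : ℕ} {δp : G} (hk : k ≤ k') (h : fs.PinD k δp) : fs.PinD k' δp := by
  obtain ⟨e, he, tt, htt, h1, h2⟩ := h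
  exact ⟨e, fs.AA_mono_le hk he, tt, htt, h1, h2⟩

lemma MPin_mono {k k' j j' : ℕ} {δ : G} (hk : k ≤ k') (hj : j ≤ j') (h : fs.MPin k j δ) :
    fs.MPin k' j' δ := by
  obtain ⟨δp, m, hor, hm, rfl⟩ := h
  exact ⟨δp, m, hor.imp (fs.PinD_mono hk) id, fs.MM_mono_le hj hm, rfl⟩

/-- promotion of a certified neighbour into the next stage -/
lemma promote {k L : ℕ} {a : V'} (h : fs.Cert k L a) (hL : L ≤ fs.B)
    (ha : a ∈ fs.Γ'.neighborSet fs.vstar) : a ∈ fs.AA (k+1) := by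
  rw [AA_succ]
  obtain ⟨h1, e, he, p, hp⟩ := h
  exact ⟨Or.inl (Or.inr ⟨ha, e, he, p, hp.trans hL⟩), ha⟩

/-- exit from an occurrence of `vstar` via a pinned translate -/
lemma pinExit {k j : ℕ} {δ : G} (h : fs.MPin k j δ) (hj : j ≤ fs.JMAX) {w' : V'}
    (hw' : w' ∈ fs.TmplVerts) (hnb : δ⁻¹ • w' ∈ fs.Γ'.neighborSet fs.vstar) :
    δ⁻¹ • w' ∈ fs.AA (k+1) := by
  obtain ⟨δp, m, hor, hm, rfl⟩ := h
  have hminv : m⁻¹ ∈ fs.MM fs.JMAX := fs.MM_inv _ _ (fs.MM_mono_le hj hm)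
  have hy' : m⁻¹ • w' ∈ fs.YY := fs.smul_mem_YY hw' hminv
  have heq : (m * δp)⁻¹ • w' = δp⁻¹ • (m⁻¹ • w') := by
    rw [mul_inv_rev, mul_smul]
  rcases hor with hpin | hfix
  · rw [AA_succ]
    refine ⟨Or.inr ?_, hnb⟩
    obtain ⟨e, he, tt, htt, h1, h2⟩ := hpin
    exact ⟨e, he, tt, htt, m⁻¹ • w', hy', δp⁻¹, h1, h2, heq⟩
  · refine fs.AA_mono_le (Nat.zero_le _) ?_
    rw [AA_zero]
    refine ⟨⟨m⁻¹ • w', hy', ?_⟩, hnb⟩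
    show (fs.P.chi fs.v fs.x)⁻¹ • (m⁻¹ • w') = (m * δp)⁻¹ • w'
    rw [heq, hfix]

end FS
end FineSec2

section FineSec3
variable {G : Type u} [Group G] [TopologicalSpace G] [IsTopologicalGroup G]
variable {V : Type v} {V' : Type w} [MulAction G V] [MulAction G V']
namespace FS
variable (fs : FS G V V')

lemma march {b c : V'} (W : fs.Γ'.Walk b c) (δ : G) {j : ℕ} (hj : j ≤ fs.JMAX)
    (hsup : ∀ w ∈ W.support, w ∈ fs.TmplVerts)
    (hdarts : ∀ d ∈ W.darts, (d.fst, d.snd) ∈ fs.Consec) :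
    ∀ (k L : ℕ), L + W.length ≤ fs.B →
    (fs.Cert k L (δ⁻¹ • b) ∨ (δ⁻¹ • b = fs.vstar ∧ fs.MPin k j δ)) →
    ∃ k' L', k' ≤ k + 2 * W.length + 2 ∧ L' ≤ L + W.length ∧
      (fs.Cert k' L' (δ⁻¹ • c) ∨ (δ⁻¹ • c = fs.vstar ∧ fs.MPin k' j δ)) := by
  revert hsup hdarts
  induction W with
  | nil =>
    intro hsup hdarts k L hbud hin
    exact ⟨k, L, by omega, le_rfl, hin⟩
  | @cons b b₂ c hadj W ih =>
    intro hsup hdarts k L hbud hin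
    have hsup' : ∀ w ∈ W.support, w ∈ fs.TmplVerts := fun w hw =>
      hsup w (by rw [SimpleGraph.Walk.support_cons]; exact List.mem_cons_of_mem _ hw)
    have hdarts' : ∀ d ∈ W.darts, (d.fst, d.snd) ∈ fs.Consec := fun d hd =>
      hdarts d (by rw [SimpleGraph.Walk.darts_cons]; exact List.mem_cons_of_mem _ hd)
    have hd1 : ((b, b₂) : V' × V') ∈ fs.Consec := by
      have : (⟨(b, b₂), hadj⟩ : fs.Γ'.Dart) ∈ (SimpleGraph.Walk.cons hadj W).darts := by
        rw [SimpleGraph.Walk.darts_cons]; exact List.mem_cons_self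
      exact hdarts _ this
    have hadj' : fs.Γ'.Adj (δ⁻¹ • b) (δ⁻¹ • b₂) := fs.hga' δ⁻¹ _ _ hadj
    have hlen : (SimpleGraph.Walk.cons hadj W).length = W.length + 1 :=
      SimpleGraph.Walk.length_cons _ _
    have hbud' : (L + 1) + W.length ≤ fs.B := by rw [hlen] at hbud; omega
    rcases hin with hcert | ⟨hb, hpin⟩
    · by_cases hb₂ : δ⁻¹ • b₂ = fs.vstar
      · have hanb : δ⁻¹ • b ∈ fs.Γ'.neighborSet fs.vstar := by
          rw [SimpleGraph.mem_neighborSet]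
          have := hadj'.symm
          rw [hb₂] at this
          exact this
        have hAA : δ⁻¹ • b ∈ fs.AA (k+1) :=
          fs.promote hcert (by omega) hanb
        have hMP : fs.MPin (k+1) j δ :=
          ⟨δ, 1, Or.inl ⟨δ⁻¹ • b, hAA, (b, b₂), hd1, rfl, hb₂⟩, fs.MM_one j, (one_mul δ).symm⟩
        obtain ⟨k', L', h1, h2, hout⟩ := ih hsup' hdarts' (k+1) (L+1) hbud' (Or.inr ⟨hb₂, hMP⟩)
        exact ⟨k', L', by rw [hlen]; omega, by rw [hlen]; omega, hout⟩
      · obtain ⟨hne, e, he, p, hp⟩ := hcert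
        have hstep : (fs.Γ'.deleteVertex fs.vstar).Adj (δ⁻¹ • b) (δ⁻¹ • b₂) := ⟨hadj', hne, hb₂⟩
        have hcert' : fs.Cert k (L+1) (δ⁻¹ • b₂) :=
          ⟨hb₂, e, he, p.concat hstep, by rw [SimpleGraph.Walk.length_concat]; omega⟩
        obtain ⟨k', L', h1, h2, hout⟩ := ih hsup' hdarts' k (L+1) hbud' (Or.inl hcert')
        exact ⟨k', L', by rw [hlen]; omega, by rw [hlen]; omega, hout⟩
    · have hb₂ne : δ⁻¹ • b₂ ≠ fs.vstar := by
        intro hcontra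
        have h2 := hadj'
        rw [hb, hcontra] at h2
        exact h2.ne rfl
      have hnb₂ : δ⁻¹ • b₂ ∈ fs.Γ'.neighborSet fs.vstar := by
        rw [SimpleGraph.mem_neighborSet]
        have h2 := hadj'
        rw [hb] at h2
        exact h2
      have hw' : b₂ ∈ fs.TmplVerts := hsup b₂ (by
        rw [SimpleGraph.Walk.support_cons]
        exact List.mem_cons_of_mem _ W.start_mem_support)
      have hAA := fs.pinExit hpin hj hw' hnb₂
      have hcert' : fs.Cert (k+1) (L+1) (δ⁻¹ • b₂) :=
        ⟨hb₂ne, δ⁻¹ • b₂, hAA, SimpleGraph.Walk.nil, by simp⟩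
      obtain ⟨k', L', h1, h2, hout⟩ := ih hsup' hdarts' (k+1) (L+1) hbud' (Or.inl hcert')
      exact ⟨k', L', by rw [hlen]; omega, by rw [hlen]; omega, hout⟩

end FS
end FineSec3

section FineSec4
variable {G : Type u} [Group G] [TopologicalSpace G] [IsTopologicalGroup G]
variable {V : Type v} {V' : Type w} [MulAction G V] [MulAction G V']
namespace FS
variable (fs : FS G V V')

/-- state at an anchor that coincides with `vstar` -/
def StB (k j : ℕ) (z : V) : Prop :=
  fs.Amp z = fs.vstar ∧ ∃ δp m : G, (fs.PinD k δp ∨ δp = fs.P.chi fs.v fs.x) ∧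
    m ∈ fs.MM j ∧ fs.P.sig z = m * δp

lemma stab_rep_compact {z : V} (hz : z ≠ fs.v) (hA : fs.Amp z = fs.vstar) :
    IsCompact ((stabilizer G (fs.P.rep z) : Subgroup G) : Set G) := by
  have hzc : IsCompact ((stabilizer G z : Subgroup G) : Set G) := by
    by_contra hnc
    exact hz (fs.hexcl z hA hnc)
  rw [← fs.P.hsig z]
  exact (isCompact_stab_smul_iff _ _).mpr hzc

lemma edgeStep {z z' : V} (hz : z ≠ fs.v) (hz' : z' ≠ fs.v) (hadj : fs.Γ.Adj z z')
    {k L j : ℕ} (hj3 : j + 3 ≤ fs.JMAX) (hbud : L + fs.lam ≤ fs.B)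
    (hin : fs.Cert k L (fs.Amp z) ∨ fs.StB k j z) :
    ∃ k' L' j', k' ≤ k + 2 * fs.lam + 4 ∧ L' ≤ L + fs.lam ∧ j' ≤ j + 3 ∧
      (fs.Cert k' L' (fs.Amp z') ∨ fs.StB k' j' z') := by
  have hbAz : (fs.P.chi z z')⁻¹ • (fs.P.chi z z' • fs.Amp z) = fs.Amp z := inv_smul_smul _ _
  have hcAz' : (fs.P.chi z z')⁻¹ • (fs.P.chi z z' • fs.Amp z') = fs.Amp z' := inv_smul_smul _ _
  have hEP : (fs.P.chi z z' • fs.Amp z, fs.P.chi z z' • fs.Amp z') ∈ EndPairs fs.P fs.tau :=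
    edge_endPair fs.P fs.tau hadj
  set W := tw fs.hconn' (fs.P.chi z z' • fs.Amp z) (fs.P.chi z z' • fs.Amp z') with hW
  have hsup : ∀ w ∈ W.support, w ∈ fs.TmplVerts := fun w hw => ⟨_, hEP, hw⟩
  have hdarts : ∀ d ∈ W.darts, (d.fst, d.snd) ∈ fs.Consec := fun d hd =>
    ⟨_, hEP, d, hd, rfl, rfl⟩
  have hlen : W.length ≤ fs.lam := fs.hlam _ hEP
  have hbud' : L + W.length ≤ fs.B := by omega
  have hin' : fs.Cert k L ((fs.P.chi z z')⁻¹ • (fs.P.chi z z' • fs.Amp z)) ∨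
      ((fs.P.chi z z')⁻¹ • (fs.P.chi z z' • fs.Amp z) = fs.vstar ∧
        fs.MPin k (j+1) (fs.P.chi z z')) := by
    rcases hin with hc | ⟨hA, δp, m, hor, hm, hσ⟩
    · left; rw [hbAz]; exact hc
    · right
      refine ⟨by rw [hbAz]; exact hA, ?_⟩
      have hs₁ : fs.P.chi z z' * (fs.P.sig z)⁻¹ ∈ fs.FF :=
        Or.inl (Or.inl ⟨fs.P.rep z, fs.P.hrepS z, fs.stab_rep_compact hz hA, K1 fs.P hadj⟩)
      refine ⟨δp, (fs.P.chi z z' * (fs.P.sig z)⁻¹) * m, hor, (fs.MM_mul_FF hm hs₁).1, ?_⟩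
      rw [mul_assoc, ← hσ]
      group
  have hjle : j + 1 ≤ fs.JMAX := by omega
  obtain ⟨k', L', h1, h2, hout⟩ := fs.march W (fs.P.chi z z') hjle hsup hdarts k L hbud' hin'
  rcases hout with hc | ⟨hA', hMP⟩
  · rw [hcAz'] at hc
    exact ⟨k', L', j, by omega, by omega, by omega, Or.inl hc⟩
  · rw [hcAz'] at hA'
    obtain ⟨δp, m, hor, hm, hδeq⟩ := hMP
    have hK2 := K2 fs.P hadj
    have hσz' : fs.P.sig z' =
        (fs.P.sig (fs.P.chi z z' • z') * fs.P.chi z z' * (fs.P.sig z')⁻¹)⁻¹ *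
          fs.P.sig (fs.P.chi z z' • z') * fs.P.chi z z' := by
      group
    have hs₂inv : (fs.P.sig (fs.P.chi z z' • z') * fs.P.chi z z' * (fs.P.sig z')⁻¹)⁻¹ ∈ fs.FF :=
      Or.inl (Or.inl ⟨fs.P.rep z', fs.P.hrepS z', fs.stab_rep_compact hz' hA',
        Subgroup.inv_mem _ hK2⟩)
    have hsigq : fs.P.sig (fs.P.chi z z' • z') ∈ fs.FF :=
      Or.inl (Or.inr ⟨(fs.P.rep z, fs.P.chi z z' • z'), fs.P.hchi2 z z' hadj, Or.inl rfl⟩)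
    refine ⟨k', L', j + 3, by omega, by omega, le_rfl, Or.inr ⟨hA', δp,
      (fs.P.sig (fs.P.chi z z' • z') * fs.P.chi z z' * (fs.P.sig z')⁻¹)⁻¹ *
        (fs.P.sig (fs.P.chi z z' • z') * m), hor, ?_, ?_⟩⟩
    · have h3 : fs.P.sig (fs.P.chi z z' • z') * m ∈ fs.MM (j + 2) :=
        (fs.MM_mul_FF hm hsigq).1
      exact (fs.MM_mul_FF h3 hs₂inv).1
    · rw [hσz', hδeq]
      group

end FS
end FineSec4

section FineSec5
variable {G : Type u} [Group G] [TopologicalSpace G] [IsTopologicalGroup G]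
variable {V : Type v} {V' : Type w} [MulAction G V] [MulAction G V']
namespace FS
variable (fs : FS G V V')

lemma B_def : fs.B = fs.lam * (fs.n + 2) + 1 := rfl
lemma JMAX_def : fs.JMAX = 3 * (fs.n + 2) := rfl
lemma Amp_v : fs.Amp fs.v = fs.vstar := rfl

lemma x_ne_v : fs.x ≠ fs.v := fun h => fs.Γ.loopless.irrefl fs.v (by
  have := fs.hvx
  rw [h] at this
  exact this)

lemma baseState : ∃ k L j, k ≤ 2 * fs.lam + 4 ∧ L ≤ fs.lam ∧ j ≤ 3 ∧
    (fs.Cert k L (fs.Amp fs.x) ∨ fs.StB k j fs.x) := by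
  have hadj : fs.Γ.Adj fs.v fs.x := fs.hvx
  have hbAz : (fs.P.chi fs.v fs.x)⁻¹ • (fs.P.chi fs.v fs.x • fs.Amp fs.v) = fs.Amp fs.v :=
    inv_smul_smul _ _
  have hcAz' : (fs.P.chi fs.v fs.x)⁻¹ • (fs.P.chi fs.v fs.x • fs.Amp fs.x) = fs.Amp fs.x :=
    inv_smul_smul _ _
  have hEP : (fs.P.chi fs.v fs.x • fs.Amp fs.v, fs.P.chi fs.v fs.x • fs.Amp fs.x) ∈
      EndPairs fs.P fs.tau := edge_endPair fs.P fs.tau hadj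
  set W := tw fs.hconn' (fs.P.chi fs.v fs.x • fs.Amp fs.v)
    (fs.P.chi fs.v fs.x • fs.Amp fs.x) with hW
  have hsup : ∀ w ∈ W.support, w ∈ fs.TmplVerts := fun w hw => ⟨_, hEP, hw⟩
  have hdarts : ∀ d ∈ W.darts, (d.fst, d.snd) ∈ fs.Consec := fun d hd =>
    ⟨_, hEP, d, hd, rfl, rfl⟩
  have hlen : W.length ≤ fs.lam := fs.hlam _ hEP
  have hbud' : 0 + W.length ≤ fs.B := by
    have := fs.B_def
    have h2 : fs.lam * (fs.n + 2) + 1 ≥ fs.lam := by nlinarith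
    omega
  have hin' : fs.Cert 0 0 ((fs.P.chi fs.v fs.x)⁻¹ • (fs.P.chi fs.v fs.x • fs.Amp fs.v)) ∨
      ((fs.P.chi fs.v fs.x)⁻¹ • (fs.P.chi fs.v fs.x • fs.Amp fs.v) = fs.vstar ∧
        fs.MPin 0 0 (fs.P.chi fs.v fs.x)) := by
    right
    refine ⟨by rw [hbAz]; rfl, ?_⟩
    exact ⟨fs.P.chi fs.v fs.x, 1, Or.inr rfl, fs.MM_one 0, (one_mul _).symm⟩
  obtain ⟨k', L', h1, h2, hout⟩ := fs.march W (fs.P.chi fs.v fs.x) (Nat.zero_le _)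
    hsup hdarts 0 0 hbud' hin'
  rcases hout with hc | ⟨hA', hMP⟩
  · rw [hcAz'] at hc
    exact ⟨k', L', 0, by omega, by omega, by omega, Or.inl hc⟩
  · rw [hcAz'] at hA'
    obtain ⟨δp, m, hor, hm, hδeq⟩ := hMP
    have hK2 := K2 fs.P hadj
    have hσz' : fs.P.sig fs.x =
        (fs.P.sig (fs.P.chi fs.v fs.x • fs.x) * fs.P.chi fs.v fs.x * (fs.P.sig fs.x)⁻¹)⁻¹ *
          fs.P.sig (fs.P.chi fs.v fs.x • fs.x) * fs.P.chi fs.v fs.x := by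
      group
    have hs₂inv : (fs.P.sig (fs.P.chi fs.v fs.x • fs.x) * fs.P.chi fs.v fs.x *
        (fs.P.sig fs.x)⁻¹)⁻¹ ∈ fs.FF :=
      Or.inl (Or.inl ⟨fs.P.rep fs.x, fs.P.hrepS fs.x, fs.stab_rep_compact fs.x_ne_v hA',
        Subgroup.inv_mem _ hK2⟩)
    have hsigq : fs.P.sig (fs.P.chi fs.v fs.x • fs.x) ∈ fs.FF :=
      Or.inl (Or.inr ⟨(fs.P.rep fs.v, fs.P.chi fs.v fs.x • fs.x), fs.P.hchi2 fs.v fs.x hadj,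
        Or.inl rfl⟩)
    refine ⟨k', L', 3, by omega, by omega, le_rfl, Or.inr ⟨hA', δp,
      (fs.P.sig (fs.P.chi fs.v fs.x • fs.x) * fs.P.chi fs.v fs.x * (fs.P.sig fs.x)⁻¹)⁻¹ *
        (fs.P.sig (fs.P.chi fs.v fs.x • fs.x) * m), hor, ?_, ?_⟩⟩
    · have h3 : fs.P.sig (fs.P.chi fs.v fs.x • fs.x) * m ∈ fs.MM 1 :=
        (fs.MM_mul_FF hm hsigq).1
      exact fs.MM_mono_le (by omega) (fs.MM_mul_FF h3 hs₂inv).1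
    · rw [hσz', hδeq]
      group

lemma mainIndAux {z x' : V} (R : (fs.Γ.deleteVertex fs.v).Walk z x') (hx' : x' = fs.x)
    (hn : R.length ≤ fs.n) :
    ∃ k L j, k ≤ (2 * fs.lam + 4) * (R.length + 1) ∧ L ≤ fs.lam * (R.length + 1) ∧
      j ≤ 3 * (R.length + 1) ∧ (fs.Cert k L (fs.Amp z) ∨ fs.StB k j z) := by
  induction R with
  | nil =>
    subst hx'
    obtain ⟨k, L, j, h1, h2, h3, hst⟩ := fs.baseState
    refine ⟨k, L, j, ?_, ?_, ?_, hst⟩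
    · simpa using (by omega : k ≤ (2 * fs.lam + 4) * 1)
    · simpa using (by omega : L ≤ fs.lam * 1)
    · simpa using (by omega : j ≤ 3 * 1)
  | @cons z z₁ _ hadj R ih =>
    have hlc : (SimpleGraph.Walk.cons hadj R).length = R.length + 1 :=
      SimpleGraph.Walk.length_cons _ _
    have hn' : R.length ≤ fs.n := by omega
    obtain ⟨k, L, j, hk, hL, hj, hst⟩ := ih hx' hn'
    have hz₁ : z₁ ≠ fs.v := hadj.2.2
    have hzv : z ≠ fs.v := hadj.2.1
    have hadj' : fs.Γ.Adj z₁ z := hadj.1.symm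
    have hj3 : j + 3 ≤ fs.JMAX := by
      have := fs.JMAX_def
      have h4 : 3 * (R.length + 1) + 3 ≤ 3 * (fs.n + 2) := by omega
      omega
    have hbud : L + fs.lam ≤ fs.B := by
      have := fs.B_def
      have h4 : fs.lam * (R.length + 1) + fs.lam = fs.lam * (R.length + 2) := by ring
      have h5 : fs.lam * (R.length + 2) ≤ fs.lam * (fs.n + 2) :=
        Nat.mul_le_mul_left _ (by omega)
      omega
    obtain ⟨k', L', j', h1, h2, h3, hout⟩ := fs.edgeStep hz₁ hzv hadj' hj3 hbud hst
    refine ⟨k', L', j', ?_, ?_, ?_, hout⟩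
    · calc k' ≤ k + (2 * fs.lam + 4) := by omega
      _ ≤ (2 * fs.lam + 4) * (R.length + 1) + (2 * fs.lam + 4) := by omega
      _ = (2 * fs.lam + 4) * (R.length + 2) := by ring
      _ = (2 * fs.lam + 4) * ((SimpleGraph.Walk.cons hadj R).length + 1) := by rw [hlc]
    · calc L' ≤ L + fs.lam := h2
      _ ≤ fs.lam * (R.length + 1) + fs.lam := by omega
      _ = fs.lam * (R.length + 2) := by ring
      _ = fs.lam * ((SimpleGraph.Walk.cons hadj R).length + 1) := by rw [hlc]
    · calc j' ≤ j + 3 := h3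
      _ ≤ 3 * (R.length + 1) + 3 := by omega
      _ = 3 * (R.length + 2) := by ring
      _ = 3 * ((SimpleGraph.Walk.cons hadj R).length + 1) := by rw [hlc]

lemma mainInd {z : V} (R : (fs.Γ.deleteVertex fs.v).Walk z fs.x) (hn : R.length ≤ fs.n) :
    ∃ k L j, k ≤ (2 * fs.lam + 4) * (R.length + 1) ∧ L ≤ fs.lam * (R.length + 1) ∧
      j ≤ 3 * (R.length + 1) ∧ (fs.Cert k L (fs.Amp z) ∨ fs.StB k j z) :=
  fs.mainIndAux R rfl hn

end FS
end FineSec5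

section FineSec6
variable {G : Type u} [Group G] [TopologicalSpace G] [IsTopologicalGroup G]
variable {V : Type v} {V' : Type w} [MulAction G V] [MulAction G V']
namespace FS
variable (fs : FS G V V')

def KM : ℕ := (2 * fs.lam + 4) * (fs.n + 3)

def FinalSet : Set V :=
  {y : V | ∃ δp : G, (fs.PinD fs.KM δp ∨ δp = fs.P.chi fs.v fs.x) ∧
    ∃ pt ∈ fs.RecPts, y = δp⁻¹ • pt}

lemma finalSet_finite : fs.FinalSet.Finite := by
  have hsub : fs.FinalSet ⊆
      ((fun pt => (fs.P.chi fs.v fs.x)⁻¹ • pt) '' fs.RecPts) ∪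
      ⋃ e ∈ fs.AA fs.KM, ⋃ tt ∈ fs.Consec, ⋃ pt ∈ fs.RecPts,
        {y : V | ∃ δ : G, δ • e = tt.1 ∧ δ • fs.vstar = tt.2 ∧ y = δ⁻¹ • pt} := by
    rintro y ⟨δp, hor, pt, hpt, rfl⟩
    rcases hor with ⟨e, he, tt, htt, h1, h2⟩ | hfix
    · refine Or.inr (Set.mem_biUnion he (Set.mem_biUnion htt (Set.mem_biUnion hpt
        ⟨δp, ?_, ?_, rfl⟩)))
      · rw [← h1, smul_inv_smul]
      · rw [← h2, smul_inv_smul]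
    · exact Or.inl ⟨pt, hpt, by rw [hfix]⟩
  refine Set.Finite.subset ?_ hsub
  refine (fs.recPts_finite.image _).union ?_
  refine (fs.AA_finite fs.KM).biUnion fun e he => fs.consec_finite.biUnion fun tt htt =>
    fs.recPts_finite.biUnion fun pt _ => ?_
  have hadj : fs.Γ'.Adj fs.vstar e := fs.AA_sub_nbhd fs.KM he
  have hE : IsCompact ((stabilizer G e ⊓ stabilizer G fs.vstar : Subgroup G) : Set G) := by
    rw [inf_comm]
    exact fs.hedge' fs.vstar e hadj
  exact pin_invsmul_finite (fun z => fs.hdisc z) hE tt.1 tt.2 pt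

lemma final {y : V} (hy : fs.Γ.Adj fs.v y) (R : (fs.Γ.deleteVertex fs.v).Walk y fs.x)
    (hR : R.length ≤ fs.n) : y ∈ fs.FinalSet := by
  obtain ⟨k, L, j, hk, hL, hj, hst⟩ := fs.mainInd R hR
  have hkKM : k ≤ fs.KM := by
    calc k ≤ (2 * fs.lam + 4) * (R.length + 1) := hk
    _ ≤ (2 * fs.lam + 4) * (fs.n + 3) := Nat.mul_le_mul_left _ (by omega)
  have hyv : y ≠ fs.v := fun h => fs.Γ.loopless.irrefl fs.v (by rw [h] at hy; exact hy)
  have hjJ : j ≤ fs.JMAX := by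
    have := fs.JMAX_def
    have h4 : 3 * (R.length + 1) ≤ 3 * (fs.n + 2) := by omega
    omega
  rcases hst with hc | ⟨hA, δp, m, hor, hm, hσ⟩
  · -- march the final edge (y, v)
    have hadj : fs.Γ.Adj y fs.v := hy.symm
    have hbAz : (fs.P.chi y fs.v)⁻¹ • (fs.P.chi y fs.v • fs.Amp y) = fs.Amp y :=
      inv_smul_smul _ _
    have hcAz' : (fs.P.chi y fs.v)⁻¹ • (fs.P.chi y fs.v • fs.Amp fs.v) = fs.Amp fs.v :=
      inv_smul_smul _ _
    have hEP : (fs.P.chi y fs.v • fs.Amp y, fs.P.chi y fs.v • fs.Amp fs.v) ∈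
        EndPairs fs.P fs.tau := edge_endPair fs.P fs.tau hadj
    set W := tw fs.hconn' (fs.P.chi y fs.v • fs.Amp y) (fs.P.chi y fs.v • fs.Amp fs.v) with hW
    have hsup : ∀ w ∈ W.support, w ∈ fs.TmplVerts := fun w hw => ⟨_, hEP, hw⟩
    have hdarts : ∀ d ∈ W.darts, (d.fst, d.snd) ∈ fs.Consec := fun d hd =>
      ⟨_, hEP, d, hd, rfl, rfl⟩
    have hlen : W.length ≤ fs.lam := fs.hlam _ hEP
    have hbud' : L + W.length ≤ fs.B := by
      have := fs.B_def
      have h4 : fs.lam * (R.length + 1) + fs.lam = fs.lam * (R.length + 2) := by ring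
      have h5 : fs.lam * (R.length + 2) ≤ fs.lam * (fs.n + 2) :=
        Nat.mul_le_mul_left _ (by omega)
      omega
    have hin' : fs.Cert k L ((fs.P.chi y fs.v)⁻¹ • (fs.P.chi y fs.v • fs.Amp y)) ∨
        ((fs.P.chi y fs.v)⁻¹ • (fs.P.chi y fs.v • fs.Amp y) = fs.vstar ∧
          fs.MPin k 0 (fs.P.chi y fs.v)) := by
      left; rw [hbAz]; exact hc
    obtain ⟨k', L', h1, h2, hout⟩ := fs.march W (fs.P.chi y fs.v) (Nat.zero_le _)
      hsup hdarts k L hbud' hin'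
    rcases hout with hc' | ⟨hA', hMP⟩
    · rw [hcAz'] at hc'
      exact absurd rfl hc'.1
    · obtain ⟨δp, m, hor, hm, hδeq⟩ := hMP
      have hkKM' : k' ≤ fs.KM := by
        calc k' ≤ k + 2 * W.length + 2 := h1
        _ ≤ (2 * fs.lam + 4) * (R.length + 1) + (2 * fs.lam + 4) := by omega
        _ = (2 * fs.lam + 4) * (R.length + 2) := by ring
        _ ≤ (2 * fs.lam + 4) * (fs.n + 3) := Nat.mul_le_mul_left _ (by omega)
      refine ⟨δp, hor.imp (fs.PinD_mono hkKM') id, m⁻¹ • fs.P.rep y,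
        ⟨fs.P.rep y, fs.P.hrepS y, m⁻¹, fs.MM_inv _ _ (fs.MM_mono_le (Nat.zero_le _) hm), rfl⟩, ?_⟩
      have hchiy : fs.P.chi y fs.v • y = fs.P.rep y := fs.P.hchi1 y fs.v hadj
      have heq2 : y = (fs.P.chi y fs.v)⁻¹ • fs.P.rep y := by rw [← hchiy, inv_smul_smul]
      conv_lhs => rw [heq2]
      rw [hδeq, mul_inv_rev, mul_smul]
  · -- direct recovery from StB
    refine ⟨δp, hor.imp (fs.PinD_mono hkKM) id, m⁻¹ • fs.P.rep y,
      ⟨fs.P.rep y, fs.P.hrepS y, m⁻¹, fs.MM_inv _ _ (fs.MM_mono_le hjJ hm), rfl⟩, ?_⟩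
    have heq2 : y = (fs.P.sig y)⁻¹ • fs.P.rep y := (sig_inv_rep fs.P y).symm
    conv_lhs => rw [heq2]
    rw [hσ, mul_inv_rev, mul_smul]

/-- The main conclusion: the angle-metric ball is finite. -/
lemma conclusion :
    {y : V | y ∈ fs.Γ.neighborSet fs.v ∧
      ∃ p : (fs.Γ.deleteVertex fs.v).Walk fs.x y, p.length ≤ fs.n}.Finite := by
  refine fs.finalSet_finite.subset ?_
  rintro y ⟨hy, p, hp⟩
  exact fs.final hy p.reverse (by rw [SimpleGraph.Walk.length_reverse]; exact hp)

end FS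
end FineSec6

section Anchor
variable {G : Type u} [Group G] [TopologicalSpace G] [IsTopologicalGroup G]
variable {V : Type v} {V' : Type w} [MulAction G V] [MulAction G V']

lemma mem_conj_map {γ : G} {H : Subgroup G} {g : G} :
    g ∈ H.map (MulAut.conj γ).toMonoidHom ↔ γ⁻¹ * g * γ ∈ H := by
  simp only [Subgroup.mem_map, MulEquiv.coe_toMonoidHom, MulAut.conj_apply]
  constructor
  · rintro ⟨h, hh, rfl⟩
    rw [show γ⁻¹ * (γ * h * γ⁻¹) * γ = h by group]
    exact hh
  · intro hg
    exact ⟨γ⁻¹ * g * γ, hg, by group⟩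

lemma conj_inv_conj_map (γ : G) (H : Subgroup G) :
    (H.map (MulAut.conj γ).toMonoidHom).map (MulAut.conj γ⁻¹).toMonoidHom = H := by
  ext g
  rw [mem_conj_map, mem_conj_map]
  rw [show γ⁻¹ * (γ⁻¹⁻¹ * g * γ⁻¹) * γ = g by group]

lemma anchor_excl {Γ : SimpleGraph V} (P : Pack G V Γ) (tau : V → V')
    (htau : ∀ u : V, ¬ IsCompact ((stabilizer G u : Subgroup G) : Set G) →
      stabilizer G (tau u) = stabilizer G u)
    (ℋ : Finset (Subgroup G))
    (hc6 : ∀ z : V, IsCompact ((stabilizer G z : Subgroup G) : Set G) ∨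
      ∃ H ∈ ℋ, ∃ g : G, stabilizer G z = conjSubgroup g H)
    (hc8 : ∀ H ∈ ℋ, ¬ IsCompact ((H : Subgroup G) : Set G) →
      ∀ a b : V, stabilizer G a = H → stabilizer G b = H → ∃ g : G, g • a = b)
    {v : V} (hv : ¬ IsCompact ((stabilizer G v : Subgroup G) : Set G)) :
    ∀ z : V, Amap P tau z = Amap P tau v →
      ¬ IsCompact ((stabilizer G z : Subgroup G) : Set G) → z = v := by
  have hstabA : ∀ w : V, ¬ IsCompact ((stabilizer G w : Subgroup G) : Set G) →
      stabilizer G (Amap P tau w) = stabilizer G w := by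
    intro w hw
    have hrepnc : ¬ IsCompact ((stabilizer G (P.rep w) : Subgroup G) : Set G) := by
      rw [← P.hsig w]
      intro hcpt
      exact hw ((isCompact_stab_smul_iff (P.sig w) w).mp hcpt)
    calc stabilizer G (Amap P tau w)
        = (stabilizer G (tau (P.rep w))).map (MulAut.conj (P.sig w)⁻¹).toMonoidHom :=
          stabilizer_smul_eq_stabilizer_map_conj _ _
    _ = (stabilizer G (P.rep w)).map (MulAut.conj (P.sig w)⁻¹).toMonoidHom := by
          rw [htau _ hrepnc]
    _ = stabilizer G ((P.sig w)⁻¹ • P.rep w) :=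
          (stabilizer_smul_eq_stabilizer_map_conj _ _).symm
    _ = stabilizer G w := by rw [sig_inv_rep]
  intro z hAz hznc
  have h2 : stabilizer G z = stabilizer G v := by
    rw [← hstabA z hznc, hAz, hstabA v hv]
  rcases hc6 v with h | ⟨H, hH, γ, hγ⟩
  · exact absurd h hv
  · have hsz : stabilizer G (γ⁻¹ • z) = H := by
      rw [stabilizer_smul_eq_stabilizer_map_conj, h2, hγ]
      exact conj_inv_conj_map γ H
    have hsv : stabilizer G (γ⁻¹ • v) = H := by
      rw [stabilizer_smul_eq_stabilizer_map_conj, hγ]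
      exact conj_inv_conj_map γ H
    have hHnc : ¬ IsCompact ((H : Subgroup G) : Set G) := by
      intro hc
      apply hv
      rw [hγ]
      exact (isCompact_conj_iff γ H).mpr hc
    obtain ⟨g, hg⟩ := hc8 H hH hHnc (γ⁻¹ • z) (γ⁻¹ • v) hsz hsv
    have hm : (γ * g * γ⁻¹) • z = v := by
      rw [mul_smul, mul_smul, hg, smul_inv_smul]
    have hr : P.rep z = P.rep v := by rw [← hm, P.hrep_smul]
    have hrepnc : ¬ IsCompact ((stabilizer G (P.rep z) : Subgroup G) : Set G) := by
      rw [← P.hsig z]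
      intro hcpt
      exact hznc ((isCompact_stab_smul_iff _ _).mp hcpt)
    have hstab : P.sig v * (P.sig z)⁻¹ ∈ stabilizer G (tau (P.rep z)) := by
      rw [mem_stabilizer_iff, mul_smul]
      have h3 : (P.sig z)⁻¹ • tau (P.rep z) = (P.sig v)⁻¹ • tau (P.rep v) := hAz
      rw [h3, smul_inv_smul, hr]
    have hstab2 : P.sig v * (P.sig z)⁻¹ ∈ stabilizer G (P.rep z) := by
      rw [← htau _ hrepnc]
      exact hstab
    calc z = (P.sig z)⁻¹ • P.rep z := (sig_inv_rep P z).symm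
    _ = (P.sig v)⁻¹ • ((P.sig v * (P.sig z)⁻¹) • P.rep z) := by
        rw [← mul_smul]; congr 1; group
    _ = (P.sig v)⁻¹ • P.rep z := by rw [mem_stabilizer_iff.mp hstab2]
    _ = (P.sig v)⁻¹ • P.rep v := by rw [hr]
    _ = v := sig_inv_rep P v

lemma fine_transfer (ℋ : Finset (Subgroup G)) {Γ : SimpleGraph V} {Γ' : SimpleGraph V'}
    (h : IsCayleyAbelsGraph G ℋ Γ) (h' : IsCayleyAbelsGraph G ℋ Γ')
    (hfine' : Γ'.Fine) : Γ.Fine := by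
  obtain ⟨hga, hconn, hdisc, hcoc, hedge, hc6, hc7, hc8⟩ := h
  obtain ⟨hga', hconn', hdisc', hcoc', hedge', hc6', hc7', hc8'⟩ := h'
  intro v
  by_cases hvc : IsCompact ((stabilizer G v : Subgroup G) : Set G)
  · intro x hx n
    obtain ⟨-, t, htfin, ht⟩ := hcoc
    refine (neighborSet_finite_of_compact_stab hdisc htfin ht hvc).subset ?_
    rintro y ⟨hy, -⟩
    exact hy
  · intro x hx n
    obtain ⟨P⟩ := exists_pack hcoc
    obtain ⟨tau, htau⟩ := exists_tau ℋ hc6 hc7' hconn'.nonempty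
    obtain ⟨Λ, hΛ⟩ := exists_lam P tau hconn' htau (fun w => hdisc' w)
    have hexcl := anchor_excl P tau htau ℋ hc6 hc8 hvc
    have hfa : Γ'.FineAt (Amap P tau v) := hfine' _
    have hvx : Γ.Adj v x := hx
    exact FS.conclusion ⟨Γ, Γ', P, tau, v, x, n, Λ, hga, hga', hdisc, hdisc', hedge', hconn',
      htau, hvx, hexcl, hfa, hΛ⟩

end Anchor

/-- Quasi-isometry invariance of Cayley-Abels graphs: any two Cayley-Abels graphs of a
proper pair `(G, ℋ)` are quasi-isometric, and if one is fine so is the other. -/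
theorem cayleyAbels_unique_up_to_quasiIsometry
    {G : Type u} [Group G] [TopologicalSpace G] [IsTopologicalGroup G] [T2Space G]
    (ℋ : Finset (Subgroup G)) (hpp : IsProperPair G ℋ)
    {V₁ : Type v} {V₂ : Type w} [MulAction G V₁] [MulAction G V₂]
    (Γ₁ : SimpleGraph V₁) (Γ₂ : SimpleGraph V₂)
    (h₁ : IsCayleyAbelsGraph G ℋ Γ₁) (h₂ : IsCayleyAbelsGraph G ℋ Γ₂) :
    QuasiIsometricGraphs Γ₁ Γ₂ ∧ (Γ₁.Fine → Γ₂.Fine) :=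
  ⟨qi_of_ca ℋ h₁ h₂, fun hf => fine_transfer ℋ h₂ h₁ hf⟩
end

section
/- Let (G, ℋ) be a proper pair and let Γ be a Cayley-Abels graph of G with respect to ℋ containing at least one edge. Let ℋ_∞ denote the set of non-compact members of ℋ, and let G/ℋ_∞ = { gH : g ∈ G, H ∈ ℋ_∞ } be the G-set given by the disjoint union of the coset spaces G/H for H ∈ ℋ_∞, with G acting by left translation. Then there is a G-equivariant bijection between G/ℋ_∞ and the set of vertices of Γ of infinite degree. -/
open MulAction

universe u v

section AuxLemmas

variable {G : Type u} [Group G]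

lemma conjSubgroup_coe (g : G) (H : Subgroup G) :
    ((conjSubgroup g H : Subgroup G) : Set G) = (fun x => g * x * g⁻¹) '' (H : Set G) := by
  rw [conjSubgroup, Subgroup.coe_map]
  rfl

lemma conjSubgroup_conjSubgroup (a b : G) (H : Subgroup G) :
    conjSubgroup a (conjSubgroup b H) = conjSubgroup (a * b) H := by
  unfold conjSubgroup
  rw [Subgroup.map_map]
  congr 1
  ext x
  simp [mul_assoc]

lemma conjSubgroup_one (H : Subgroup G) : conjSubgroup (1 : G) H = H := by
  unfold conjSubgroup
  ext x
  simp

lemma isCompact_conjSubgroup [TopologicalSpace G] [IsTopologicalGroup G]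
    (g : G) {H : Subgroup G} (h : IsCompact (H : Set G)) :
    IsCompact ((conjSubgroup g H : Subgroup G) : Set G) := by
  rw [conjSubgroup_coe]
  exact h.image ((continuous_const.mul continuous_id).mul continuous_const)

lemma stabilizer_smul_eq_conjSubgroup {V : Type v} [MulAction G V] (g : G) (v : V) :
    stabilizer G (g • v) = conjSubgroup g (stabilizer G v) :=
  MulAction.stabilizer_smul_eq_stabilizer_map_conj g v

lemma exists_neighbor {V : Type v} {Γ : SimpleGraph V} (hconn : Γ.Connected)
    {a b : V} (hab : Γ.Adj a b) (v : V) : ∃ x, Γ.Adj v x := by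
  by_cases hva : v = a
  · exact ⟨b, hva ▸ hab⟩
  · obtain ⟨w⟩ := hconn v a
    cases w with
    | nil => exact absurd rfl hva
    | cons h _ => exact ⟨_, h⟩

/-- If `S` is a compact subgroup and the stabilizer of `x` is open, the set
`{s • x : s ∈ S}` is finite. -/
lemma finite_smul_orbit {G : Type u} [Group G] [TopologicalSpace G]
    [IsTopologicalGroup G] {V : Type v} [MulAction G V]
    {S : Subgroup G} (hS : IsCompact (S : Set G))
    {x : V} (hx : IsOpen ((stabilizer G x : Subgroup G) : Set G)) :
    {y : V | ∃ s ∈ S, s • x = y}.Finite := by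
  have hcov : (S : Set G) ⊆
      ⋃ s : S, (fun y => (s : G) * y) '' ((stabilizer G x : Subgroup G) : Set G) := by
    intro g hg
    exact Set.mem_iUnion.2 ⟨⟨g, hg⟩, 1, (stabilizer G x).one_mem, mul_one g⟩
  obtain ⟨F, hF⟩ := hS.elim_finite_subcover
    (fun s : S => (fun y => (s : G) * y) '' ((stabilizer G x : Subgroup G) : Set G))
    (fun s : S => (Homeomorph.mulLeft (s : G)).isOpen_image.2 hx) hcov
  have hsub : {y : V | ∃ s ∈ S, s • x = y} ⊆ (fun s : S => (s : G) • x) '' F := by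
    rintro y ⟨s, hs, rfl⟩
    obtain ⟨t, ht, u, hu, heq⟩ := Set.mem_iUnion₂.1 (hF hs)
    refine ⟨t, ht, ?_⟩
    have hux : u • x = x := hu
    calc (t : G) • x = (t : G) • (u • x) := by rw [hux]
      _ = ((t : G) * u) • x := (mul_smul _ _ _).symm
      _ = s • x := by rw [show (t : G) * u = s from heq]
  exact ((F.finite_toSet).image _).subset hsub

/-- If the stabilizer of `v` is compact, then `v` has finitely many neighbours. -/
lemma neighborSet_finite_of_compact_stabilizer {G : Type u} [Group G]
    [TopologicalSpace G] [IsTopologicalGroup G] {V : Type v} [MulAction G V]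
    {Γ : SimpleGraph V} (hact : IsGraphAction G Γ) (hdisc : IsDiscreteAction G Γ)
    (hcocpt : IsCocompactAction G Γ) {v : V}
    (hv : IsCompact ((stabilizer G v : Subgroup G) : Set G)) :
    (Γ.neighborSet v).Finite := by
  obtain ⟨-, t, htfin, ht⟩ := hcocpt
  have hsub : Γ.neighborSet v ⊆
      ⋃ p ∈ t, {x : V | Γ.Adj v x ∧ ∃ g : G, g • v = p.1 ∧ g • x = p.2} := by
    intro x hx
    obtain ⟨g, hg⟩ := ht v x hx
    exact Set.mem_iUnion₂.2 ⟨(g • v, g • x), hg, hx, g, rfl, rfl⟩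
  refine Set.Finite.subset (htfin.biUnion fun p _ => ?_) hsub
  rcases Set.eq_empty_or_nonempty
      {x : V | Γ.Adj v x ∧ ∃ g : G, g • v = p.1 ∧ g • x = p.2} with he | ⟨x₀, hx₀, g₀, hg₀v, hg₀x⟩
  · rw [he]; exact Set.finite_empty
  · refine Set.Finite.subset (finite_smul_orbit hv (hdisc x₀)) ?_
    rintro x ⟨hx, g, hgv, hgx⟩
    refine ⟨g⁻¹ * g₀, ?_, ?_⟩
    · have : (g⁻¹ * g₀) • v = v := by
        rw [mul_smul, hg₀v, ← hgv, inv_smul_smul]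
      exact this
    · rw [mul_smul, hg₀x, ← hgx, inv_smul_smul]

/-- If the stabilizer of `v` is open but not compact, then `v` has infinitely many
neighbours. -/
lemma neighborSet_infinite_of_noncompact_stabilizer {G : Type u} [Group G]
    [TopologicalSpace G] [IsTopologicalGroup G] {V : Type v} [MulAction G V]
    {Γ : SimpleGraph V} (hact : IsGraphAction G Γ) (hdisc : IsDiscreteAction G Γ)
    (hconn : Γ.Connected) (hedge : ∃ a b : V, Γ.Adj a b)
    (hestab : HasCompactEdgeStabilizers G Γ) {v : V}
    (hv : ¬ IsCompact ((stabilizer G v : Subgroup G) : Set G)) :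
    (Γ.neighborSet v).Infinite := by
  rw [Set.Infinite]
  intro hfin
  obtain ⟨a, b, hab⟩ := hedge
  obtain ⟨x, hx⟩ := exists_neighbor hconn hab v
  have hK : IsCompact ((stabilizer G v ⊓ stabilizer G x : Subgroup G) : Set G) :=
    hestab v x hx
  set N : Set V := (fun g : G => g • x) '' ((stabilizer G v : Subgroup G) : Set G) with hN
  have hNsub : N ⊆ Γ.neighborSet v := by
    rintro y ⟨g, hg, rfl⟩
    have : Γ.Adj (g • v) (g • x) := hact g v x hx
    rwa [show g • v = v from hg] at this
  have hNfin : N.Finite := hfin.subset hNsub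
  haveI : Finite N := hNfin.to_subtype
  choose cfun hc1 hc2 using fun y : N => y.2
  have hcov : ((stabilizer G v : Subgroup G) : Set G) ⊆
      ⋃ y : N, (fun z => cfun y * z) ''
        ((stabilizer G v ⊓ stabilizer G x : Subgroup G) : Set G) := by
    intro g hg
    have hmem : g • x ∈ N := ⟨g, hg, rfl⟩
    set y : N := ⟨g • x, hmem⟩ with hy
    refine Set.mem_iUnion.2 ⟨y, (cfun y)⁻¹ * g, ?_, by group⟩
    constructor
    · exact (stabilizer G v).mul_mem ((stabilizer G v).inv_mem (hc1 y)) hg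
    · show ((cfun y)⁻¹ * g) • x = x
      rw [mul_smul]
      have : g • x = cfun y • x := (hc2 y).symm
      rw [this, inv_smul_smul]
  have hCcpt : IsCompact (⋃ y : N, (fun z => cfun y * z) ''
      ((stabilizer G v ⊓ stabilizer G x : Subgroup G) : Set G)) :=
    isCompact_iUnion fun y =>
      hK.image (continuous_const.mul continuous_id)
  have hclosed : IsClosed ((stabilizer G v : Subgroup G) : Set G) :=
    Subgroup.isClosed_of_isOpen _ (hdisc v)
  exact hv (hCcpt.of_isClosed_subset hclosed hcov)

end AuxLemmas

/-- For a proper pair `(G, ℋ)` and a Cayley-Abels graph `Γ` of `G` with respect to `ℋ`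
containing at least one edge, there is a `G`-equivariant bijection between the disjoint
union of the coset spaces `G/H` for non-compact `H ∈ ℋ` and the set of vertices of `Γ`
of infinite degree. -/
theorem equivariant_bijection_cosets_infinite_degree
    {G : Type u} [Group G] [TopologicalSpace G] [IsTopologicalGroup G] [T2Space G]
    (ℋ : Finset (Subgroup G)) (hpp : IsProperPair G ℋ)
    {V : Type v} [MulAction G V] (Γ : SimpleGraph V)
    (hCA : IsCayleyAbelsGraph G ℋ Γ)
    (hedge : ∃ a b : V, Γ.Adj a b) :
    ∃ f : ((H : {H : Subgroup G // H ∈ ℋ ∧ ¬ IsCompact (H : Set G)}) ×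
        (G ⧸ (H.1 : Subgroup G))) → V,
      (∀ x, (Γ.neighborSet (f x)).Infinite) ∧
      Function.Injective f ∧
      (∀ v : V, (Γ.neighborSet v).Infinite → ∃ x, f x = v) ∧
      (∀ (g : G) (H : {H : Subgroup G // H ∈ ℋ ∧ ¬ IsCompact (H : Set G)})
        (c : G ⧸ (H.1 : Subgroup G)), f ⟨H, g • c⟩ = g • f ⟨H, c⟩) := by
  obtain ⟨hact, hconn, hdisc, hcocpt, hestab, hdich, hexist, htrans⟩ := hCA
  obtain ⟨-, -, hconj⟩ := hpp
  -- choose for each non-compact member a vertex whose stabilizer is that subgroup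
  choose vH hvH using
    fun H : {H : Subgroup G // H ∈ ℋ ∧ ¬ IsCompact (H : Set G)} => hexist H.1 H.2.1
  have wd : ∀ (H : {H : Subgroup G // H ∈ ℋ ∧ ¬ IsCompact (H : Set G)}) (g g' : G),
      (QuotientGroup.leftRel (H.1 : Subgroup G)) g g' → g • vH H = g' • vH H := by
    intro H g g' hrel
    have hmem : g⁻¹ * g' ∈ (H.1 : Subgroup G) := QuotientGroup.leftRel_apply.1 hrel
    rw [← hvH H] at hmem
    have : (g⁻¹ * g') • vH H = vH H := hmem
    calc g • vH H = g • ((g⁻¹ * g') • vH H) := by rw [this]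
      _ = (g * (g⁻¹ * g')) • vH H := (mul_smul _ _ _).symm
      _ = g' • vH H := by rw [mul_inv_cancel_left]
  refine ⟨fun x => Quotient.liftOn' x.2 (fun g => g • vH x.1) (wd x.1), ?_, ?_, ?_, ?_⟩
  · -- infinite degree
    rintro ⟨H, c⟩
    obtain ⟨g, rfl⟩ := QuotientGroup.mk_surjective c
    show (Γ.neighborSet (g • vH H)).Infinite
    refine neighborSet_infinite_of_noncompact_stabilizer hact hdisc hconn hedge hestab ?_
    rw [stabilizer_smul_eq_conjSubgroup, hvH H]
    intro hcpt
    have := isCompact_conjSubgroup g⁻¹ hcpt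
    rw [conjSubgroup_conjSubgroup, inv_mul_cancel, conjSubgroup_one] at this
    exact H.2.2 this
  · -- injectivity
    rintro ⟨H, c⟩ ⟨H', c'⟩ hfe
    obtain ⟨g, rfl⟩ := QuotientGroup.mk_surjective c
    obtain ⟨g', rfl⟩ := QuotientGroup.mk_surjective c'
    have heq : g • vH H = g' • vH H' := hfe
    have hstab : conjSubgroup g (H.1 : Subgroup G) = conjSubgroup g' (H'.1 : Subgroup G) := by
      rw [← hvH H, ← hvH H', ← stabilizer_smul_eq_conjSubgroup, ← stabilizer_smul_eq_conjSubgroup,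
        heq]
    have hHH' : H = H' := by
      refine Subtype.ext (hconj H.1 H.2.1 H'.1 H'.2.1 H.2.2 H'.2.2 ⟨g'⁻¹ * g, ?_⟩)
      rw [← conjSubgroup_conjSubgroup, hstab, conjSubgroup_conjSubgroup, inv_mul_cancel,
        conjSubgroup_one]
    subst hHH'
    have hmk : (QuotientGroup.mk g : G ⧸ (H.1 : Subgroup G)) = QuotientGroup.mk g' := by
      rw [QuotientGroup.eq]
      rw [← hvH H]
      show (g⁻¹ * g') • vH H = vH H
      rw [mul_smul, ← heq, inv_smul_smul]
    rw [hmk]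
  · -- surjectivity onto infinite-degree vertices
    intro v hv
    have hnc : ¬ IsCompact ((stabilizer G v : Subgroup G) : Set G) := by
      intro hcpt
      exact hv (neighborSet_finite_of_compact_stabilizer hact hdisc hcocpt hcpt)
    rcases hdich v with hcpt | ⟨H, hH, g, hstab⟩
    · exact absurd hcpt hnc
    have hHnc : ¬ IsCompact ((H : Subgroup G) : Set G) := by
      intro hcpt
      exact hnc (hstab ▸ isCompact_conjSubgroup g hcpt)
    set Hel : {H : Subgroup G // H ∈ ℋ ∧ ¬ IsCompact (H : Set G)} := ⟨H, hH, hHnc⟩ with hHel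
    have hstab' : stabilizer G (g⁻¹ • v) = H := by
      rw [stabilizer_smul_eq_conjSubgroup, hstab, conjSubgroup_conjSubgroup, inv_mul_cancel,
        conjSubgroup_one]
    obtain ⟨k, hk⟩ := htrans H hH hHnc (vH Hel) (g⁻¹ • v) (hvH Hel) hstab'
    refine ⟨⟨Hel, QuotientGroup.mk (g * k)⟩, ?_⟩
    show (g * k) • vH Hel = v
    rw [mul_smul, hk, smul_inv_smul]
  · -- equivariance
    intro g H c
    obtain ⟨a, rfl⟩ := QuotientGroup.mk_surjective c
    show Quotient.liftOn' (g • (QuotientGroup.mk a : G ⧸ (H.1 : Subgroup G)))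
      (fun g' => g' • vH H) (wd H) = g • (a • vH H)
    rw [MulAction.Quotient.smul_mk]
    show (g • a) • vH H = g • (a • vH H)
    rw [smul_eq_mul, mul_smul]
end
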